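/- arXiv:1012.2192 — 3 statements merged into one kernel-verified Lean document; each statement's English description precedes it below -/
import Mathlib

section
/- Let P be a closed set of positions, n = u_{n,P}(q) the corresponding pattern algebra with pattern group G = 1 + n, and let λ ∈ n* be quasi-monomial. Then: (a) the right orbit λG equals λ + span_{F_q}{ e*_{ij} : (i,j) ∈ ⊥L_λ }, where e*_{ij}(X) = X_{ij}; and (b) for every μ ∈ λG, l¹_μ = { X ∈ u_{n,P}(q) : X_{ij} = 0 for all (i,j) ∈ ⊥L_λ } and s¹_μ = { X ∈ u_{n,P}(q) : X_{ij} = 0 for all (i,j) ∈ ⊥S_λ }. -/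
open scoped BigOperators Classical ComplexOrder
open Complex

set_option linter.unusedSectionVars false

noncomputable section

namespace Paper

variable {F : Type*} [Field F]

/-! ### Characters of finite groups -/

/-- `f : G → ℂ` is the character of some finite-dimensional complex representation. -/
def IsCharacter {G : Type} [Monoid G] (f : G → ℂ) : Prop :=
  ∃ V : FDRep ℂ G, V.character = f

/-- `f : G → ℂ` is the character of some irreducible finite-dimensional complex
representation. -/
def IsIrreducibleCharacter {G : Type} [Monoid G] (f : G → ℂ) : Prop :=
  ∃ V : FDRep ℂ G, CategoryTheory.Simple V ∧ V.character = f

/-- The standard inner product `⟨f, h⟩ = |G|⁻¹ ∑ₓ f x conj (h x)` on complex-valued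
functions on a finite group. -/
def cinner (G : Type*) (f h : G → ℂ) : ℂ :=
  (Nat.card G : ℂ)⁻¹ * ∑ᶠ x : G, f x * (starRingEnd ℂ) (h x)

/-- Induction of a complex-valued function from (the subset underlying) a subgroup `H` of a
finite group `G`, via the Frobenius formula
`Ind_H^G(f)(g) = |H|⁻¹ ∑_{x ∈ G, xgx⁻¹ ∈ H} f (xgx⁻¹)`. -/
def indFun {G : Type*} [Group G] (H : Set G) (f : G → ℂ) : G → ℂ := fun g =>
  (Nat.card H : ℂ)⁻¹ * ∑ᶠ x : G, if x * g * x⁻¹ ∈ H then f (x * g * x⁻¹) else 0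

/-- The set of elements of the `m`-th cyclotomic field `ℚ(ζ_m) ⊆ ℂ`, where
`ζ_m = exp (2πi/m)`. -/
def cycField (m : ℕ) : Set ℂ :=
  (Algebra.adjoin ℚ {Complex.exp (2 * Real.pi * Complex.I / m)} : Subalgebra ℚ ℂ)

/-! ### Algebra groups of matrix algebras -/

variable {n : ℕ}

/-- The subgroup `1 + S` of invertible matrices, for `S` a non-unital subalgebra of the
matrix algebra (for example the algebra of strictly upper triangular matrices). -/
def grp [Fintype F] (S : NonUnitalSubalgebra F (Matrix (Fin n) (Fin n) F)) :
    Subgroup (Matrix (Fin n) (Fin n) F)ˣ where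
  carrier := {g | (g : Matrix (Fin n) (Fin n) F) - 1 ∈ S}
  one_mem' := by
    show ((1 : (Matrix (Fin n) (Fin n) F)ˣ) : Matrix (Fin n) (Fin n) F) - 1 ∈ S
    rw [Units.val_one, sub_self]; exact zero_mem S
  mul_mem' := by
    intro a b ha hb
    show ((a * b : (Matrix (Fin n) (Fin n) F)ˣ) : Matrix (Fin n) (Fin n) F) - 1 ∈ S
    have h : ((a * b : (Matrix (Fin n) (Fin n) F)ˣ) : Matrix (Fin n) (Fin n) F) - 1 =
        ((a : Matrix (Fin n) (Fin n) F) - 1) + ((b : Matrix (Fin n) (Fin n) F) - 1) +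
          ((a : Matrix (Fin n) (Fin n) F) - 1) * ((b : Matrix (Fin n) (Fin n) F) - 1) := by
      rw [Units.val_mul]; noncomm_ring
    rw [h]
    exact add_mem (add_mem ha hb) (mul_mem ha hb)
  inv_mem' := by
    intro a ha
    show ((a⁻¹ : (Matrix (Fin n) (Fin n) F)ˣ) : Matrix (Fin n) (Fin n) F) - 1 ∈ S
    have hpow : ∀ m : ℕ, ((a ^ m : (Matrix (Fin n) (Fin n) F)ˣ) : Matrix (Fin n) (Fin n) F)
        - 1 ∈ S := by
      intro m
      induction m with
      | zero => rw [pow_zero, Units.val_one, sub_self]; exact zero_mem S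
      | succ m ih =>
          rw [pow_succ, Units.val_mul]
          have h : ((a ^ m : (Matrix (Fin n) (Fin n) F)ˣ) : Matrix (Fin n) (Fin n) F) *
              (a : Matrix (Fin n) (Fin n) F) - 1 =
              (((a ^ m : (Matrix (Fin n) (Fin n) F)ˣ) : Matrix (Fin n) (Fin n) F) - 1) +
              ((a : Matrix (Fin n) (Fin n) F) - 1) +
              (((a ^ m : (Matrix (Fin n) (Fin n) F)ˣ) : Matrix (Fin n) (Fin n) F) - 1) *
              ((a : Matrix (Fin n) (Fin n) F) - 1) := by noncomm_ring
          rw [h]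
          exact add_mem (add_mem ih ha) (mul_mem ih ha)
    have hk : 0 < orderOf a := orderOf_pos a
    have hinv : a⁻¹ = a ^ (orderOf a - 1) := by
      have h1 : a ^ (orderOf a - 1) * a = 1 := by
        rw [← pow_succ, Nat.sub_add_cancel hk, pow_orderOf_eq_one]
      exact (eq_inv_of_mul_eq_one_left h1).symm
    rw [hinv]
    exact hpow _

variable [Fintype F] {S : NonUnitalSubalgebra F (Matrix (Fin n) (Fin n) F)}

lemma mem_grp_iff {g : (Matrix (Fin n) (Fin n) F)ˣ} :
    g ∈ grp S ↔ (g : Matrix (Fin n) (Fin n) F) - 1 ∈ S := Iff.rfl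

/-- The underlying matrix of an element of an algebra group. -/
def mat (g : ↥(grp S)) : Matrix (Fin n) (Fin n) F :=
  ((g : (Matrix (Fin n) (Fin n) F)ˣ) : Matrix (Fin n) (Fin n) F)

lemma mat_mem (g : ↥(grp S)) : mat g - 1 ∈ S := g.2

/-- `g - 1` as an element of the algebra `S`. -/
def gsub (g : ↥(grp S)) : ↥S := ⟨mat g - 1, mat_mem g⟩

/-- The dual space of `F`-linear functionals on the algebra `S`. -/
abbrev Dual (S : NonUnitalSubalgebra F (Matrix (Fin n) (Fin n) F)) := ↥S →ₗ[F] F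

/-- The function `θ_λ(g) = θ(λ(g-1))` on the algebra group `1 + S`. -/
def thetaFun (θ : AddChar F ℂ) (lam : Dual S) : ↥(grp S) → ℂ := fun g => θ (lam (gsub g))

lemma conj_mem (a b : ↥(grp S)) {X : Matrix (Fin n) (Fin n) F} (hX : X ∈ S) :
    mat a * X * mat b ∈ S := by
  have h : mat a * X * mat b =
      X + (mat a - 1) * X + X * (mat b - 1) + (mat a - 1) * X * (mat b - 1) := by noncomm_ring
  rw [h]
  exact add_mem (add_mem (add_mem hX (mul_mem (mat_mem a) hX)) (mul_mem hX (mat_mem b)))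
    (mul_mem (mul_mem (mat_mem a) hX) (mat_mem b))

/-- The functional `X ↦ λ(a · X · b)`, used to define the various actions of an algebra group
on the dual space of its algebra. -/
def conjDual (a b : ↥(grp S)) (lam : Dual S) : Dual S where
  toFun X := lam ⟨mat a * (X : Matrix (Fin n) (Fin n) F) * mat b, conj_mem a b X.2⟩
  map_add' X Y := by
    rw [← map_add]
    exact congrArg lam (Subtype.ext (by simp [mul_add, add_mul]))
  map_smul' c X := by
    rw [RingHom.id_apply, ← map_smul]
    exact congrArg lam (Subtype.ext (by simp [Matrix.mul_smul, Matrix.smul_mul]))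

/-- The left orbit `Gλ` of `λ` under `(gλ)(X) = λ(g⁻¹X)`. -/
def leftOrbit (lam : Dual S) : Set (Dual S) := {ν | ∃ g : ↥(grp S), ν = conjDual g⁻¹ 1 lam}

/-- The two-sided orbit `GλG` of `λ` under `(gλh)(X) = λ(g⁻¹Xh⁻¹)`. -/
def biOrbit (lam : Dual S) : Set (Dual S) := {ν | ∃ g h : ↥(grp S), ν = conjDual g⁻¹ h⁻¹ lam}

/-- The coadjoint orbit of `λ` under `λ^g(X) = λ(gXg⁻¹)`. -/
def coadjOrbit (lam : Dual S) : Set (Dual S) := {ν | ∃ g : ↥(grp S), ν = conjDual g g⁻¹ lam}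

/-- The supercharacter `χ_λ = (|Gλ|/|GλG|) ∑_{ν ∈ GλG} θ_ν`. -/
def superChar (θ : AddChar F ℂ) (lam : Dual S) : ↥(grp S) → ℂ := fun g =>
  ((Nat.card (leftOrbit lam) : ℂ) / (Nat.card (biOrbit lam) : ℂ)) *
    ∑ᶠ ν ∈ biOrbit lam, thetaFun θ ν g

/-- The Kirillov function `ψ_λ = |λ^G|^{-1/2} ∑_{ν ∈ λ^G} θ_ν`. -/
def kirillov (θ : AddChar F ℂ) (lam : Dual S) : ↥(grp S) → ℂ := fun g =>
  ((Real.sqrt (Nat.card (coadjOrbit lam)) : ℂ))⁻¹ * ∑ᶠ ν ∈ coadjOrbit lam, thetaFun θ ν g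


/-! ### The strictly upper triangular algebra -/

/-- The `F`-algebra of strictly upper triangular `n × n` matrices. -/
def uAlg (n : ℕ) (F : Type*) [Field F] :
    NonUnitalSubalgebra F (Matrix (Fin n) (Fin n) F) :=
  Submodule.toNonUnitalSubalgebra
    { carrier := {M | ∀ i j : Fin n, j ≤ i → M i j = 0}
      add_mem' := fun ha hb i j hij => by
        rw [Matrix.add_apply, ha i j hij, hb i j hij, add_zero]
      zero_mem' := fun i j _ => rfl
      smul_mem' := fun c a ha i j hij => by
        rw [Matrix.smul_apply, ha i j hij, smul_zero] }
    (by
      intro X Y hX hY i j hij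
      rw [Matrix.mul_apply]
      refine Finset.sum_eq_zero fun k _ => ?_
      by_cases hk : k ≤ i
      · rw [hX i k hk, zero_mul]
      · rw [hY k j (hij.trans (not_le.mp hk).le), mul_zero])

lemma mem_uAlg {M : Matrix (Fin n) (Fin n) F} :
    M ∈ uAlg n F ↔ ∀ i j : Fin n, j ≤ i → M i j = 0 := Iff.rfl

/-! ### The chain of subspaces `l^i ⊆ ⋯ ⊆ s^i` attached to a linear functional -/

section Chain

variable {A : Type*} [NonUnitalRing A] [Module F A] [SMulCommClass F A A] [IsScalarTower F A A]

/-- For subspaces `s, t` of an algebra, the subspace `{x ∈ s | λ(x·t) = 0}`. -/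
def lker (lam : A →ₗ[F] F) (s t : Submodule F A) : Submodule F A where
  carrier := {x | x ∈ s ∧ ∀ y ∈ t, lam (x * y) = 0}
  add_mem' := fun ha hb => ⟨s.add_mem ha.1 hb.1, fun y hy => by
    rw [add_mul, map_add, ha.2 y hy, hb.2 y hy, add_zero]⟩
  zero_mem' := ⟨s.zero_mem, fun y _ => by rw [zero_mul, map_zero]⟩
  smul_mem' := fun c a ha => ⟨s.smul_mem c ha.1, fun y hy => by
    rw [smul_mul_assoc, map_smul, ha.2 y hy, smul_zero]⟩

/-- The pair of subspaces `(l^i, s^i)` defined inductively by `l⁰ = 0`, `s⁰ = n`,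
`l^{i+1} = {X ∈ s^i : λ(X·s^i) = 0}`, `s^{i+1} = {X ∈ s^i : λ(X·l^{i+1}) = 0}`. -/
def chain (lam : A →ₗ[F] F) : ℕ → Submodule F A × Submodule F A
  | 0 => (⊥, ⊤)
  | i + 1 =>
    (lker lam (chain lam i).2 (chain lam i).2,
     lker lam (chain lam i).2 (lker lam (chain lam i).2 (chain lam i).2))

/-- The subspace `l^i_λ`. -/
def lC (lam : A →ₗ[F] F) (i : ℕ) : Submodule F A := (chain lam i).1

/-- The subspace `s^i_λ`. -/
def sC (lam : A →ₗ[F] F) (i : ℕ) : Submodule F A := (chain lam i).2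

/-- The terminal subspace `l̄_λ` of the ascending chain `l¹ ⊆ l² ⊆ ⋯`. -/
def lbar (lam : A →ₗ[F] F) : Submodule F A := ⨆ i, lC lam i

/-- The terminal subspace `s̄_λ` of the descending chain `s¹ ⊇ s² ⊇ ⋯`. -/
def sbar (lam : A →ₗ[F] F) : Submodule F A := ⨅ i, sC lam i

end Chain

/-- The underlying set of the algebra subgroup `L̄_λ = 1 + l̄_λ`. -/
def Lset (lam : Dual S) : Set ↥(grp S) := {g | gsub g ∈ lbar lam}

/-- The underlying set of the algebra subgroup `S̄_λ = 1 + s̄_λ`. -/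
def Sset (lam : Dual S) : Set ↥(grp S) := {g | gsub g ∈ sbar lam}

/-- The character `ξ_λ = Ind_{L̄_λ}^G (θ_λ)`. -/
def xiChar (θ : AddChar F ℂ) (lam : Dual S) : ↥(grp S) → ℂ :=
  indFun (Lset lam) (thetaFun θ lam)

/-! ### Quasi-monomial functionals and shapes -/

/-- The value `λ_{ij} = λ(e_{ij})` (interpreted as `0` when `e_{ij} ∉ S`). -/
def lamEntry (lam : Dual S) (i j : Fin n) : F :=
  if h : Matrix.single i j (1 : F) ∈ S then lam ⟨_, h⟩ else 0

/-- A functional is quasi-monomial if the matrix `(λ_{ij})` has at most one nonzero entry in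
each row and in each column. -/
def QuasiMonomial (lam : Dual S) : Prop :=
  (∀ i j k : Fin n, lamEntry lam i j ≠ 0 → lamEntry lam i k ≠ 0 → j = k) ∧
  (∀ i j k : Fin n, lamEntry lam i k ≠ 0 → lamEntry lam j k ≠ 0 → i = j)

/-- The parts of the shape of `λ`: the equivalence classes of the finest equivalence
relation for which `i ∼ j` whenever `λ_{ij} ≠ 0`. -/
def shapeClasses (lam : Dual S) : Set (Set (Fin n)) :=
  {s | ∃ i : Fin n,
    s = {j | Relation.EqvGen (fun a b => lamEntry lam a b ≠ 0 ∨ lamEntry lam b a ≠ 0) i j}}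

/-! ### Explicit functionals -/

/-- The linear functional on `S` determined by a matrix `c` of coefficients:
`X ↦ ∑_{i,j} c_{ij} X_{ij}`; it sends the elementary matrix `e_{ij}` to `c_{ij}`. -/
def lamOf (S : NonUnitalSubalgebra F (Matrix (Fin n) (Fin n) F))
    (c : Matrix (Fin n) (Fin n) F) : Dual S where
  toFun X := ∑ i : Fin n, ∑ j : Fin n, c i j * (X : Matrix (Fin n) (Fin n) F) i j
  map_add' X Y := by
    simp [Matrix.add_apply, mul_add, Finset.sum_add_distrib]
  map_smul' a X := by
    simp only [RingHom.id_apply, smul_eq_mul, Finset.mul_sum]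
    refine Finset.sum_congr rfl fun i _ => Finset.sum_congr rfl fun j _ => ?_
    have : ((a • X : ↥S) : Matrix (Fin n) (Fin n) F) i j
        = a * (X : Matrix (Fin n) (Fin n) F) i j := by
      simp [Matrix.smul_apply]
    rw [this]; ring

/-- The coordinate functional `e*_{ij} : X ↦ X_{ij}` on `S`. -/
def coordFn (S : NonUnitalSubalgebra F (Matrix (Fin n) (Fin n) F))
    (a : Fin n × Fin n) : Dual S where
  toFun X := (X : Matrix (Fin n) (Fin n) F) a.1 a.2
  map_add' X Y := by simp
  map_smul' c X := by simp

/-- Matrix entry in (1-based) coordinates, `0` when out of range. -/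
def ent (X : Matrix (Fin n) (Fin n) F) (a : ℕ × ℕ) : F :=
  if h : 1 ≤ a.1 ∧ a.1 ≤ n ∧ 1 ≤ a.2 ∧ a.2 ≤ n then
    X ⟨a.1 - 1, by omega⟩ ⟨a.2 - 1, by omega⟩ else 0


/-! ### The specific functional `λ` on `u_{n}(q)` from Section 3.3 of the paper -/

/-- The coefficient matrix of the functional `λ` (positions written 1-based). -/
def lamCoef (r n : ℕ) (F : Type*) [Field F] : Matrix (Fin n) (Fin n) F := fun a b =>
  let j := (a : ℕ) + 1
  let k := (b : ℕ) + 1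
  if 1 ≤ j ∧ j ≤ r ∧ k = j + r then -1
  else if 1 ≤ j ∧ j ≤ r ∧ k = j + 2 * r then 1
  else if r + 1 ≤ j ∧ j ≤ 2 * r ∧ k = j + 2 * r + 1 then -1
  else if r + 1 ≤ j ∧ j ≤ 2 * r ∧ k = j + 3 * r + 1 then 1
  else if 2 * r + 1 ≤ j ∧ j ≤ 3 * r + 1 ∧ k = j + r then 1
  else if 3 * r + 2 ≤ j ∧ j ≤ 4 * r + 1 ∧ k = j + 2 * r then 1
  else 0

/-- The linear functional `λ ∈ u_n(q)*` of the paper, determined by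
`λ(e_{jk}) = -1` if `j = k - r ∈ [1,r]`, `λ(e_{jk}) = 1` if `j = k - 2r ∈ [1,r]`,
`λ(e_{jk}) = -1` if `j = k - 2r - 1 ∈ [r+1,2r]`, `λ(e_{jk}) = 1` if `j = k - 3r - 1 ∈ [r+1,2r]`,
`λ(e_{jk}) = 1` if `j = k - r ∈ [2r+1,3r+1]`, `λ(e_{jk}) = 1` if `j = k - 2r ∈ [3r+2,4r+1]`,
and `λ(e_{jk}) = 0` otherwise. -/
def lamStd (r n : ℕ) (F : Type*) [Field F] [Fintype F] : Dual (uAlg n F) :=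
  lamOf (uAlg n F) (lamCoef r n F)

/-! ### Pattern algebras -/

/-- A set of positions is closed when `(i,j) ∈ P` and `(j,k) ∈ P` imply `(i,k) ∈ P`. -/
def IsClosedPositions {n : ℕ} (P : Set (Fin n × Fin n)) : Prop :=
  ∀ i j k : Fin n, (i, j) ∈ P → (j, k) ∈ P → (i, k) ∈ P

/-- The subspace of matrices supported on a set `P` of positions. -/
def patSub (n : ℕ) (F : Type*) [Field F] (P : Set (Fin n × Fin n)) :
    Submodule F (Matrix (Fin n) (Fin n) F) where
  carrier := {M | ∀ i j : Fin n, (i, j) ∉ P → M i j = 0}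
  add_mem' := fun ha hb i j hij => by
    rw [Matrix.add_apply, ha i j hij, hb i j hij, add_zero]
  zero_mem' := fun i j _ => rfl
  smul_mem' := fun c a ha i j hij => by rw [Matrix.smul_apply, ha i j hij, smul_zero]

/-- The pattern algebra `u_{n,P}(q)` of matrices supported on a closed set `P` of
positions. -/
def patAlg (n : ℕ) (F : Type*) [Field F] (P : Set (Fin n × Fin n))
    (hC : IsClosedPositions P) : NonUnitalSubalgebra F (Matrix (Fin n) (Fin n) F) :=
  (patSub n F P).toNonUnitalSubalgebra (by
    intro X Y hX hY
    intro i j hij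
    rw [Matrix.mul_apply]
    refine Finset.sum_eq_zero fun k _ => ?_
    by_cases hik : (i, k) ∈ P
    · by_cases hkj : (k, j) ∈ P
      · exact absurd (hC i k j hik hkj) hij
      · rw [hY k j hkj, mul_zero]
    · rw [hX i k hik, zero_mul])


/-! ### The algebra `a_n(q)` of superdiagonal-constant strictly upper triangular matrices -/

/-- Membership condition for `a_n(q)` : strictly upper triangular, and constant along each
superdiagonal. -/
def aCond {n : ℕ} (M : Matrix (Fin n) (Fin n) F) : Prop :=
  (∀ i j : Fin n, j ≤ i → M i j = 0) ∧
  ∀ i j i' j' : Fin n, (i : ℕ) < j → (i' : ℕ) < j' →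
    (i : ℕ) + (j' : ℕ) = (i' : ℕ) + (j : ℕ) → M i j = M i' j'

lemma aCond_mul {n : ℕ} {X Y : Matrix (Fin n) (Fin n) F}
    (hX : aCond X) (hY : aCond Y) : aCond (X * Y) := by
  obtain ⟨hXu, hXc⟩ := hX
  obtain ⟨hYu, hYc⟩ := hY
  have hupper : ∀ i j : Fin n, j ≤ i → (X * Y) i j = 0 := by
    intro i j hij
    rw [Matrix.mul_apply]
    refine Finset.sum_eq_zero fun k _ => ?_
    by_cases hk : k ≤ i
    · rw [hXu i k hk, zero_mul]
    · rw [hYu k j (hij.trans (not_le.mp hk).le), mul_zero]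
  refine ⟨hupper, ?_⟩
  intro i j i' j' hij hij' hsum
  rw [Matrix.mul_apply, Matrix.mul_apply]
  have h1 : ∀ k : Fin n, ¬((i : ℕ) < (k : ℕ) ∧ (k : ℕ) < (j : ℕ)) → X i k * Y k j = 0 := by
    intro k hk
    by_cases h : (i : ℕ) < (k : ℕ)
    · have hjk : j ≤ k := by rw [Fin.le_def]; omega
      rw [hYu k j hjk, mul_zero]
    · have hki : k ≤ i := by rw [Fin.le_def]; omega
      rw [hXu i k hki, zero_mul]
  have h2 : ∀ k : Fin n, ¬((i' : ℕ) < (k : ℕ) ∧ (k : ℕ) < (j' : ℕ)) → X i' k * Y k j' = 0 := by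
    intro k hk
    by_cases h : (i' : ℕ) < (k : ℕ)
    · have hjk : j' ≤ k := by rw [Fin.le_def]; omega
      rw [hYu k j' hjk, mul_zero]
    · have hki : k ≤ i' := by rw [Fin.le_def]; omega
      rw [hXu i' k hki, zero_mul]
  have e1 : ∑ k : Fin n, X i k * Y k j
      = ∑ k ∈ Finset.univ.filter (fun k : Fin n => (i : ℕ) < (k : ℕ) ∧ (k : ℕ) < (j : ℕ)),
        X i k * Y k j := by
    refine (Finset.sum_filter_of_ne fun k _ hk => ?_).symm
    by_contra hp
    exact hk (h1 k hp)
  have e2 : ∑ k : Fin n, X i' k * Y k j'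
      = ∑ k ∈ Finset.univ.filter (fun k : Fin n => (i' : ℕ) < (k : ℕ) ∧ (k : ℕ) < (j' : ℕ)),
        X i' k * Y k j' := by
    refine (Finset.sum_filter_of_ne fun k _ hk => ?_).symm
    by_contra hp
    exact hk (h2 k hp)
  rw [e1, e2]
  refine Finset.sum_bij'
    (fun (k : Fin n) (hk : k ∈ Finset.univ.filter
        (fun k : Fin n => (i : ℕ) < (k : ℕ) ∧ (k : ℕ) < (j : ℕ))) =>
      (⟨(i' : ℕ) + ((k : ℕ) - (i : ℕ)), by
        have h1 := (Finset.mem_filter.mp hk).2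
        have h2 := j'.isLt
        omega⟩ : Fin n))
    (fun (m : Fin n) (hm : m ∈ Finset.univ.filter
        (fun m : Fin n => (i' : ℕ) < (m : ℕ) ∧ (m : ℕ) < (j' : ℕ))) =>
      (⟨(i : ℕ) + ((m : ℕ) - (i' : ℕ)), by
        have h1 := (Finset.mem_filter.mp hm).2
        have h2 := j.isLt
        omega⟩ : Fin n))
    ?_ ?_ ?_ ?_ ?_
  · intro k hk
    have h1 := (Finset.mem_filter.mp hk).2
    simp only [Finset.mem_filter, Finset.mem_univ, true_and]
    constructor
    · omega
    · omega
  · intro m hm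
    have h1 := (Finset.mem_filter.mp hm).2
    simp only [Finset.mem_filter, Finset.mem_univ, true_and]
    constructor
    · omega
    · omega
  · intro k hk
    have h1 := (Finset.mem_filter.mp hk).2
    exact Fin.ext (by simp only [Fin.val_mk]; omega)
  · intro m hm
    have h1 := (Finset.mem_filter.mp hm).2
    exact Fin.ext (by simp only [Fin.val_mk]; omega)
  · intro k hk
    have h1 := (Finset.mem_filter.mp hk).2
    have hx : X i k = X i' ⟨(i' : ℕ) + ((k : ℕ) - (i : ℕ)), by
        have h2 := j'.isLt; omega⟩ := by
      refine hXc i k i' _ h1.1 ?_ ?_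
      · simp only [Fin.val_mk]; omega
      · simp only [Fin.val_mk]; omega
    have hy : Y k j = Y ⟨(i' : ℕ) + ((k : ℕ) - (i : ℕ)), by
        have h2 := j'.isLt; omega⟩ j' := by
      refine hYc k j _ j' h1.2 ?_ ?_
      · simp only [Fin.val_mk]; omega
      · simp only [Fin.val_mk]; omega
    rw [hx, hy]

/-- The algebra `a_n(q)` of strictly upper triangular matrices that are constant along each
superdiagonal. -/
def aAlg (n : ℕ) (F : Type*) [Field F] [Fintype F] :
    NonUnitalSubalgebra F (Matrix (Fin n) (Fin n) F) :=
  Submodule.toNonUnitalSubalgebra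
    { carrier := {M | aCond M}
      add_mem' := by
        rintro a b ⟨hau, hac⟩ ⟨hbu, hbc⟩
        refine ⟨fun i j hij => by rw [Matrix.add_apply, hau i j hij, hbu i j hij, add_zero],
          fun i j i' j' h1 h2 h3 => ?_⟩
        rw [Matrix.add_apply, Matrix.add_apply, hac i j i' j' h1 h2 h3,
          hbc i j i' j' h1 h2 h3]
      zero_mem' := ⟨fun i j _ => rfl, fun _ _ _ _ _ _ _ => rfl⟩
      smul_mem' := by
        rintro c a ⟨hau, hac⟩
        refine ⟨fun i j hij => by rw [Matrix.smul_apply, hau i j hij, smul_zero],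
          fun i j i' j' h1 h2 h3 => ?_⟩
        rw [Matrix.smul_apply, Matrix.smul_apply, hac i j i' j' h1 h2 h3] }
    (fun X Y hX hY => aCond_mul hX hY)

lemma mem_aAlg {M : Matrix (Fin n) (Fin n) F} : M ∈ aAlg n F ↔ aCond M := Iff.rfl


/-- Iterated product `a * b₁ * ⋯ * b_k` of elements of a (non-unital) algebra. -/
def mulChain {A : Type*} [Mul A] : A → List A → A
  | a, [] => a
  | a, b :: l => mulChain (a * b) l

/-! ### Algebra groups of abstract nilpotent algebras, via the unitization -/

section AlgebraGroup

variable (F : Type) [Field F] (A : Type) [NonUnitalRing A] [Module F A]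
  [SMulCommClass F A A] [IsScalarTower F A A]

/-- The algebra `A` is nilpotent: some power `A^k` vanishes, i.e. all products of `k`
elements of `A` are zero. -/
def IsNilpotentAlgebra : Prop :=
  ∃ k : ℕ, ∀ (a : A) (l : List A), l.length + 1 = k → mulChain a l = 0

/-- The algebra group `G = 1 + A`, realized as the group of units of the unitization
`F ⊕ A` whose scalar component equals `1` (for `A` nilpotent these are exactly the
elements `1 + X`, `X ∈ A`). -/
def algGrp : Subgroup (Unitization F A)ˣ where
  carrier := {u | ((u : Unitization F A)).fst = 1}
  one_mem' := by simp
  mul_mem' := by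
    intro a b ha hb
    show ((a * b : (Unitization F A)ˣ) : Unitization F A).fst = 1
    rw [Units.val_mul, Unitization.fst_mul]
    rw [Set.mem_setOf_eq] at ha hb
    rw [ha, hb, one_mul]
  inv_mem' := by
    intro a ha
    rw [Set.mem_setOf_eq] at ha
    show ((a⁻¹ : (Unitization F A)ˣ) : Unitization F A).fst = 1
    have h : ((a : Unitization F A) * ((a⁻¹ : (Unitization F A)ˣ) : Unitization F A)).fst
        = (1 : Unitization F A).fst := by
      rw [Units.mul_inv]
    rw [Unitization.fst_mul, ha, one_mul, Unitization.fst_one] at h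
    exact h

variable {F A}

/-- The element `g - 1 ∈ A` for `g` in the algebra group `1 + A`. -/
def sndU (g : ↥(algGrp F A)) : A := ((g : (Unitization F A)ˣ) : Unitization F A).snd

/-- The function `θ_λ(g) = θ(λ(g - 1))` on the algebra group `1 + A`. -/
def thetaFunU (θ : AddChar F ℂ) (lam : A →ₗ[F] F) : ↥(algGrp F A) → ℂ := fun g =>
  θ (lam (sndU g))

/-- The coadjoint action: `λ^g(X) = λ(g X g⁻¹)`. -/
def coadjU (g : ↥(algGrp F A)) (lam : A →ₗ[F] F) : A →ₗ[F] F where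
  toFun X := lam ((((g : (Unitization F A)ˣ) : Unitization F A) * (X : Unitization F A) *
    ((((g : (Unitization F A)ˣ))⁻¹ : (Unitization F A)ˣ) : Unitization F A)).snd)
  map_add' X Y := by
    rw [← map_add, ← Unitization.snd_add]
    refine congrArg lam (congrArg (fun x : Unitization F A => x.snd) ?_)
    rw [Unitization.inr_add]
    noncomm_ring
  map_smul' c X := by
    rw [RingHom.id_apply, ← map_smul, ← Unitization.snd_smul]
    refine congrArg lam (congrArg (fun x : Unitization F A => x.snd) ?_)
    rw [Unitization.inr_smul, mul_smul_comm, smul_mul_assoc]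

/-- The coadjoint orbit of `λ`. -/
def coadjOrbitU (lam : A →ₗ[F] F) : Set (A →ₗ[F] F) :=
  {nu | ∃ g : ↥(algGrp F A), nu = coadjU g lam}

/-- The Kirillov function `ψ_λ` of the algebra group `1 + A`. -/
def kirillovU (θ : AddChar F ℂ) (lam : A →ₗ[F] F) : ↥(algGrp F A) → ℂ := fun g =>
  ((Real.sqrt (Nat.card (coadjOrbitU lam)) : ℂ))⁻¹ *
    ∑ᶠ nu ∈ coadjOrbitU lam, thetaFunU θ nu g

/-- The underlying set of the algebra subgroup `L̄_λ = 1 + l̄_λ`. -/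
def LsetU (lam : A →ₗ[F] F) : Set ↥(algGrp F A) := {g | sndU g ∈ lbar lam}

/-- The underlying set of the algebra subgroup `S̄_λ = 1 + s̄_λ`. -/
def SsetU (lam : A →ₗ[F] F) : Set ↥(algGrp F A) := {g | sndU g ∈ sbar lam}

/-- The character `ξ_λ = Ind_{L̄_λ}^G(θ_λ)` of the algebra group `1 + A`. -/
def xiU (θ : AddChar F ℂ) (lam : A →ₗ[F] F) : ↥(algGrp F A) → ℂ :=
  indFun (LsetU lam) (thetaFunU θ lam)

/-- The set `Ξ_λ = {gλsg⁻¹ : g ∈ G, s ∈ S̄_λ}`, i.e. the functionals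
`ν(X) = λ(g⁻¹ X g s⁻¹)`. -/
def XiSet (lam : A →ₗ[F] F) : Set (A →ₗ[F] F) :=
  {nu | ∃ g s : ↥(algGrp F A), s ∈ SsetU lam ∧ ∀ X : A,
    nu X = lam (((((g : (Unitization F A)ˣ))⁻¹ : (Unitization F A)ˣ) * (X : Unitization F A) *
      ((g : (Unitization F A)ˣ) : Unitization F A) *
      ((((s : (Unitization F A)ˣ))⁻¹ : (Unitization F A)ˣ) : Unitization F A)).snd)}

end AlgebraGroup


/-- The right orbit `λG` of `λ` under `(λg)(X) = λ(Xg⁻¹)`. -/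
def rightOrbit {n : ℕ} {F : Type*} [Field F] [Fintype F]
    {S : NonUnitalSubalgebra F (Matrix (Fin n) (Fin n) F)} (lam : Dual S) : Set (Dual S) :=
  {nu | ∃ g : ↥(grp S), nu = conjDual 1 g⁻¹ lam}

/-- The set `⊥L_λ = {(i,j) ∈ P : ∃ k, λ_{ik} ≠ 0 and (j,k) ∈ P}`. -/
def perpL {n : ℕ} {F : Type*} [Field F] [Fintype F] (P : Set (Fin n × Fin n))
    {S : NonUnitalSubalgebra F (Matrix (Fin n) (Fin n) F)} (lam : Dual S) :
    Set (Fin n × Fin n) :=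
  {a | a ∈ P ∧ ∃ k : Fin n, lamEntry lam a.1 k ≠ 0 ∧ (a.2, k) ∈ P}

/-- The set `⊥S_λ = {(i,j) ∈ P : ∃ k, λ_{ik} ≠ 0, (j,k) ∈ P, (j,k) ∉ ⊥L_λ}`. -/
def perpS {n : ℕ} {F : Type*} [Field F] [Fintype F] (P : Set (Fin n × Fin n))
    {S : NonUnitalSubalgebra F (Matrix (Fin n) (Fin n) F)} (lam : Dual S) :
    Set (Fin n × Fin n) :=
  {a | a ∈ P ∧ ∃ k : Fin n, lamEntry lam a.1 k ≠ 0 ∧ (a.2, k) ∈ P ∧ (a.2, k) ∉ perpL P lam}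

/-- The subspace of elements of `S` vanishing at all positions in `T`. -/
def vanishOn {n : ℕ} {F : Type*} [Field F] [Fintype F]
    (S : NonUnitalSubalgebra F (Matrix (Fin n) (Fin n) F)) (T : Set (Fin n × Fin n)) :
    Submodule F ↥S where
  carrier := {X | ∀ a ∈ T, (X : Matrix (Fin n) (Fin n) F) a.1 a.2 = 0}
  add_mem' := by
    intro X Y hX hY a ha
    have h : ((X + Y : ↥S) : Matrix (Fin n) (Fin n) F) = ↑X + ↑Y := rfl
    rw [h, Matrix.add_apply, hX a ha, hY a ha, add_zero]
  zero_mem' := fun a _ => rfl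
  smul_mem' := by
    intro c X hX a ha
    have h : ((c • X : ↥S) : Matrix (Fin n) (Fin n) F) = c • ↑X := rfl
    rw [h, Matrix.smul_apply, hX a ha, smul_zero]

/-! ### Auxiliary lemmas for Statement 8 -/

section Aux8

variable {F : Type} [Field F] [Fintype F] {n : ℕ} {P : Set (Fin n × Fin n)}

lemma mem_patAlg {hC : IsClosedPositions P} {M : Matrix (Fin n) (Fin n) F} :
    M ∈ patAlg n F P hC ↔ ∀ i j : Fin n, (i, j) ∉ P → M i j = 0 := Iff.rfl

lemma std_mem (hC : IsClosedPositions P) {i j : Fin n} (h : (i, j) ∈ P) :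
    Matrix.single i j (1 : F) ∈ patAlg n F P hC := by
  rw [mem_patAlg]
  intro a b hab
  show (if i = a ∧ j = b then (1 : F) else 0) = 0
  rw [if_neg]
  rintro ⟨rfl, rfl⟩
  exact hab h

/-- The elementary matrix `e_{ij}` as an element of the pattern algebra. -/
def elt (hC : IsClosedPositions P) {i j : Fin n} (h : (i, j) ∈ P) : ↥(patAlg n F P hC) :=
  ⟨Matrix.single i j (1 : F), std_mem hC h⟩

lemma lamEntry_eq {hC : IsClosedPositions P} (lam : Dual (patAlg n F P hC)) {i j : Fin n}
    (h : (i, j) ∈ P) : lamEntry lam i j = lam (elt hC h) := by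
  rw [lamEntry, dif_pos (std_mem hC h)]
  rfl

lemma lamEntry_eq_zero {hC : IsClosedPositions P} (lam : Dual (patAlg n F P hC)) {i j : Fin n}
    (h : (i, j) ∉ P) : lamEntry lam i j = 0 := by
  rw [lamEntry, dif_neg]
  intro hmem
  have h1 : Matrix.single i j (1 : F) i j = 0 := (mem_patAlg.mp hmem) i j h
  rw [Matrix.single_apply_same] at h1
  exact one_ne_zero h1

lemma lam_eval {hC : IsClosedPositions P} (lam : Dual (patAlg n F P hC))
    (X : ↥(patAlg n F P hC)) :
    lam X = ∑ i : Fin n, ∑ j : Fin n,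
      lamEntry lam i j * (X : Matrix (Fin n) (Fin n) F) i j := by
  classical
  have hX : X = ∑ i : Fin n, ∑ j : Fin n, ((X : Matrix (Fin n) (Fin n) F) i j) •
      (if h : (i, j) ∈ P then elt hC h else 0) := by
    apply Subtype.ext
    rw [AddSubmonoidClass.coe_finset_sum]
    conv_lhs => rw [Matrix.matrix_eq_sum_single (X : Matrix (Fin n) (Fin n) F)]
    refine Finset.sum_congr rfl fun i _ => ?_
    rw [AddSubmonoidClass.coe_finset_sum]
    refine Finset.sum_congr rfl fun j _ => ?_
    rw [SetLike.val_smul]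
    by_cases h : (i, j) ∈ P
    · rw [dif_pos h]
      show _ = (X : Matrix (Fin n) (Fin n) F) i j • Matrix.single i j (1 : F)
      rw [Matrix.smul_single, smul_eq_mul, mul_one]
    · rw [dif_neg h]
      have h0 : (X : Matrix (Fin n) (Fin n) F) i j = 0 := X.2 i j h
      rw [h0, Matrix.single_zero]
      show (0 : Matrix (Fin n) (Fin n) F) = (0 : F) • ((0 : ↥(patAlg n F P hC)) :
        Matrix (Fin n) (Fin n) F)
      rw [zero_smul]
  conv_lhs => rw [hX]
  rw [map_sum]
  refine Finset.sum_congr rfl fun i _ => ?_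
  rw [map_sum]
  refine Finset.sum_congr rfl fun j _ => ?_
  rw [map_smul, smul_eq_mul]
  by_cases h : (i, j) ∈ P
  · rw [dif_pos h, lamEntry_eq lam h, mul_comm]
  · rw [dif_neg h, map_zero, mul_zero, lamEntry_eq_zero lam h, zero_mul]

lemma lam_mul_elt {hC : IsClosedPositions P} (lam : Dual (patAlg n F P hC))
    (X : ↥(patAlg n F P hC)) {j k : Fin n} (hjk : (j, k) ∈ P) :
    lam (X * elt hC hjk) = ∑ i : Fin n,
      lamEntry lam i k * (X : Matrix (Fin n) (Fin n) F) i j := by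
  rw [lam_eval]
  refine Finset.sum_congr rfl fun i _ => ?_
  rw [Finset.sum_eq_single k]
  · have h1 : ((X * elt hC hjk : ↥(patAlg n F P hC)) : Matrix (Fin n) (Fin n) F) i k
        = (X : Matrix (Fin n) (Fin n) F) i j := by
      have : ((X * elt hC hjk : ↥(patAlg n F P hC)) : Matrix (Fin n) (Fin n) F)
          = (X : Matrix (Fin n) (Fin n) F) * Matrix.single j k (1 : F) := rfl
      rw [this, Matrix.mul_single_apply_same, mul_one]
    rw [h1]
  · intro k' _ hk'
    have h1 : ((X * elt hC hjk : ↥(patAlg n F P hC)) : Matrix (Fin n) (Fin n) F) i k' = 0 := by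
      have : ((X * elt hC hjk : ↥(patAlg n F P hC)) : Matrix (Fin n) (Fin n) F)
          = (X : Matrix (Fin n) (Fin n) F) * Matrix.single j k (1 : F) := rfl
      rw [this]
      exact Matrix.mul_single_apply_of_ne (c := (1 : F)) (i := j) (j := k) (a := i) (b := k') (hbj := hk') (M := _)
    rw [h1, mul_zero]
  · exact fun h => absurd (Finset.mem_univ k) h

lemma lam_mul_elt_qm {hC : IsClosedPositions P} (lam : Dual (patAlg n F P hC))
    (hqm : QuasiMonomial lam) (X : ↥(patAlg n F P hC)) {i j k : Fin n}
    (hik : lamEntry lam i k ≠ 0) (hjk : (j, k) ∈ P) :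
    lam (X * elt hC hjk) = lamEntry lam i k * (X : Matrix (Fin n) (Fin n) F) i j := by
  rw [lam_mul_elt lam X hjk]
  apply Finset.sum_eq_single_of_mem i (Finset.mem_univ i)
  intro i' _ hi'
  by_cases h : lamEntry lam i' k = 0
  · rw [h, zero_mul]
  · exact absurd (hqm.2 i' i k h hik) hi'

lemma mem_vanishOn {S : NonUnitalSubalgebra F (Matrix (Fin n) (Fin n) F)}
    {T : Set (Fin n × Fin n)} {X : ↥S} :
    X ∈ vanishOn S T ↔ ∀ a ∈ T, (X : Matrix (Fin n) (Fin n) F) a.1 a.2 = 0 := Iff.rfl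

lemma lam_mul_vanish {hC : IsClosedPositions P} (lam : Dual (patAlg n F P hC))
    {X Z : ↥(patAlg n F P hC)} {T : Set (Fin n × Fin n)}
    (hX : ∀ a ∈ T, (X : Matrix (Fin n) (Fin n) F) a.1 a.2 = 0)
    (hT : ∀ i j k : Fin n, lamEntry lam i k ≠ 0 →
      (Z : Matrix (Fin n) (Fin n) F) j k ≠ 0 → (i, j) ∈ P → (i, j) ∈ T) :
    lam (X * Z) = 0 := by
  rw [lam_eval]
  apply Finset.sum_eq_zero; intro i _
  apply Finset.sum_eq_zero; intro k _
  rw [MulMemClass.coe_mul, Matrix.mul_apply, Finset.mul_sum]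
  apply Finset.sum_eq_zero; intro j _
  by_cases h1 : lamEntry lam i k = 0
  · rw [h1, zero_mul]
  by_cases h2 : (Z : Matrix (Fin n) (Fin n) F) j k = 0
  · rw [h2, mul_zero, mul_zero]
  by_cases h3 : (i, j) ∈ P
  · rw [hX (i, j) (hT i j k h1 h2 h3), zero_mul, mul_zero]
  · rw [X.2 i j h3, zero_mul, mul_zero]

lemma vanish_perpL_mul {hC : IsClosedPositions P} (lam : Dual (patAlg n F P hC))
    {X : ↥(patAlg n F P hC)} (hX : X ∈ vanishOn (patAlg n F P hC) (perpL P lam))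
    (Z : ↥(patAlg n F P hC)) : lam (X * Z) = 0 := by
  refine lam_mul_vanish lam hX ?_
  intro i j k h1 h2 h3
  have hjk : (j, k) ∈ P := by
    by_contra hc
    exact h2 (Z.2 j k hc)
  exact ⟨h3, k, h1, hjk⟩

lemma vanish_perpS_mul {hC : IsClosedPositions P} (lam : Dual (patAlg n F P hC))
    {X Z : ↥(patAlg n F P hC)} (hX : X ∈ vanishOn (patAlg n F P hC) (perpS P lam))
    (hZ : Z ∈ vanishOn (patAlg n F P hC) (perpL P lam)) : lam (X * Z) = 0 := by
  refine lam_mul_vanish lam hX ?_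
  intro i j k h1 h2 h3
  have hjk : (j, k) ∈ P := by
    by_contra hc
    exact h2 (Z.2 j k hc)
  have hnotL : (j, k) ∉ perpL P lam := fun hc => h2 (hZ (j, k) hc)
  exact ⟨h3, k, h1, hjk, hnotL⟩

lemma mem_vanish_perpL_iff {hC : IsClosedPositions P} (lam : Dual (patAlg n F P hC))
    (hqm : QuasiMonomial lam) (X : ↥(patAlg n F P hC)) :
    X ∈ vanishOn (patAlg n F P hC) (perpL P lam) ↔
      ∀ Z : ↥(patAlg n F P hC), lam (X * Z) = 0 := by
  constructor
  · exact fun hX Z => vanish_perpL_mul lam hX Z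
  · intro h a ha
    obtain ⟨haP, k, hk, hjk⟩ := ha
    have h0 := h (elt hC hjk)
    rw [lam_mul_elt_qm lam hqm X hk hjk] at h0
    exact (mul_eq_zero.mp h0).resolve_left hk

end Aux8
section Aux8b

variable {F : Type} [Field F] [Fintype F] {n : ℕ}
  {S : NonUnitalSubalgebra F (Matrix (Fin n) (Fin n) F)}

lemma mat_one : mat (1 : ↥(grp S)) = (1 : Matrix (Fin n) (Fin n) F) := by
  simp [mat]

lemma mat_mul_mat_inv (g : ↥(grp S)) : mat g * mat g⁻¹ = 1 := by
  have h : ((g⁻¹ : ↥(grp S)) : (Matrix (Fin n) (Fin n) F)ˣ)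
      = ((g : (Matrix (Fin n) (Fin n) F)ˣ))⁻¹ := rfl
  rw [mat, mat, h, Units.mul_inv]

/-- Right multiplication of an algebra element by a group element. -/
def rmul (Y : ↥S) (g : ↥(grp S)) : ↥S :=
  ⟨(Y : Matrix (Fin n) (Fin n) F) * mat g, by
    have h : (Y : Matrix (Fin n) (Fin n) F) * mat g
        = (Y : Matrix (Fin n) (Fin n) F) + (Y : Matrix (Fin n) (Fin n) F) * (mat g - 1) := by
      noncomm_ring
    rw [h]
    exact add_mem Y.2 (mul_mem Y.2 (mat_mem g))⟩

lemma rmul_rmul_inv (Y : ↥S) (g : ↥(grp S)) : rmul (rmul Y g) g⁻¹ = Y := by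
  apply Subtype.ext
  show ((Y : Matrix (Fin n) (Fin n) F) * mat g) * mat g⁻¹ = (Y : Matrix (Fin n) (Fin n) F)
  rw [mul_assoc, mat_mul_mat_inv, mul_one]

lemma rmul_inv_rmul (Y : ↥S) (g : ↥(grp S)) : rmul (rmul Y g⁻¹) g = Y := by
  have h := rmul_rmul_inv Y g⁻¹
  rwa [inv_inv] at h

lemma conj_eval (g : ↥(grp S)) (lam : Dual S) (X Y : ↥S) :
    conjDual 1 g lam (X * Y) = lam (X * rmul Y g) := by
  refine congrArg lam (Subtype.ext ?_)
  show mat 1 * ((X : Matrix (Fin n) (Fin n) F) * (Y : Matrix (Fin n) (Fin n) F)) * mat g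
    = (X : Matrix (Fin n) (Fin n) F) * ((Y : Matrix (Fin n) (Fin n) F) * mat g)
  rw [mat_one, one_mul, mul_assoc]

lemma conj_eval0 (g : ↥(grp S)) (lam : Dual S) (X : ↥S) :
    conjDual 1 g lam X = lam (rmul X g) := by
  refine congrArg lam (Subtype.ext ?_)
  show mat 1 * (X : Matrix (Fin n) (Fin n) F) * mat g
    = (X : Matrix (Fin n) (Fin n) F) * mat g
  rw [mat_one, one_mul]

/-- The functional `X ↦ λ(X h)`. -/
def psiFun (lam : Dual S) (h : ↥S) : Dual S where
  toFun X := lam (X * h)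
  map_add' X Y := by rw [add_mul, map_add]
  map_smul' c X := by rw [RingHom.id_apply, smul_mul_assoc, map_smul]

lemma conj_decomp (lam : Dual S) (g : ↥(grp S)) :
    conjDual 1 g lam = lam + psiFun lam (gsub g) := by
  apply LinearMap.ext; intro X
  rw [LinearMap.add_apply]
  have h1 : X + X * gsub g = rmul X g := by
    apply Subtype.ext
    show (X : Matrix (Fin n) (Fin n) F) + (X : Matrix (Fin n) (Fin n) F) * (mat g - 1)
      = (X : Matrix (Fin n) (Fin n) F) * mat g
    noncomm_ring
  rw [conj_eval0, ← h1, map_add]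
  rfl

/-- The linear map `h ↦ (X ↦ λ(X h))`. -/
def Psi (lam : Dual S) : ↥S →ₗ[F] Dual S where
  toFun := psiFun lam
  map_add' h h' := by
    apply LinearMap.ext; intro X
    show lam (X * (h + h')) = lam (X * h) + lam (X * h')
    rw [mul_add, map_add]
  map_smul' c h := by
    apply LinearMap.ext; intro X
    show lam (X * (c • h)) = c • lam (X * h)
    rw [mul_smul_comm, map_smul]

lemma coordFn_apply (a : Fin n × Fin n) (X : ↥S) :
    coordFn S a X = (X : Matrix (Fin n) (Fin n) F) a.1 a.2 := rfl

end Aux8b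
section Aux8c

variable {F : Type} [Field F] [Fintype F] {n : ℕ} {P : Set (Fin n × Fin n)}

lemma psi_mem_span {hC : IsClosedPositions P} (lam : Dual (patAlg n F P hC))
    (h : ↥(patAlg n F P hC)) :
    psiFun lam h ∈ Submodule.span F (coordFn (patAlg n F P hC) '' perpL P lam) := by
  classical
  have key : psiFun lam h = ∑ a : Fin n × Fin n,
      (if a ∈ perpL P lam then
        (∑ k : Fin n, lamEntry lam a.1 k * (h : Matrix (Fin n) (Fin n) F) a.2 k) •
          coordFn (patAlg n F P hC) a
      else 0) := by
    apply LinearMap.ext; intro X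
    rw [LinearMap.sum_apply]
    show lam (X * h) = _
    rw [lam_eval]
    have l1 : ∀ i k : Fin n, lamEntry lam i k *
        ((X * h : ↥(patAlg n F P hC)) : Matrix (Fin n) (Fin n) F) i k
        = ∑ j : Fin n, lamEntry lam i k * ((X : Matrix (Fin n) (Fin n) F) i j *
            (h : Matrix (Fin n) (Fin n) F) j k) := by
      intro i k
      rw [MulMemClass.coe_mul, Matrix.mul_apply, Finset.mul_sum]
    simp_rw [l1]
    have l2 : ∀ i : Fin n, ∑ k : Fin n, ∑ j : Fin n,
        lamEntry lam i k * ((X : Matrix (Fin n) (Fin n) F) i j *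
          (h : Matrix (Fin n) (Fin n) F) j k)
        = ∑ j : Fin n, ∑ k : Fin n, lamEntry lam i k *
            ((X : Matrix (Fin n) (Fin n) F) i j * (h : Matrix (Fin n) (Fin n) F) j k) :=
      fun i => Finset.sum_comm
    simp_rw [l2]
    have l3 : ∀ i j : Fin n, ∑ k : Fin n, lamEntry lam i k *
        ((X : Matrix (Fin n) (Fin n) F) i j * (h : Matrix (Fin n) (Fin n) F) j k)
        = (∑ k : Fin n, lamEntry lam i k * (h : Matrix (Fin n) (Fin n) F) j k) *
            (X : Matrix (Fin n) (Fin n) F) i j := by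
      intro i j
      rw [Finset.sum_mul]
      exact Finset.sum_congr rfl fun k _ => by ring
    simp_rw [l3]
    rw [Fintype.sum_prod_type]
    refine Finset.sum_congr rfl fun i _ => ?_
    refine Finset.sum_congr rfl fun j _ => ?_
    by_cases ha : (i, j) ∈ perpL P lam
    · rw [if_pos ha, LinearMap.smul_apply, coordFn_apply, smul_eq_mul]
    · rw [if_neg ha, LinearMap.zero_apply]
      by_cases haP : (i, j) ∈ P
      · have hc : (∑ k : Fin n, lamEntry lam i k * (h : Matrix (Fin n) (Fin n) F) j k)
            = 0 := by
          apply Finset.sum_eq_zero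
          intro k _
          by_cases h1 : lamEntry lam i k = 0
          · rw [h1, zero_mul]
          · by_cases h2 : (j, k) ∈ P
            · exact absurd ⟨haP, k, h1, h2⟩ ha
            · rw [h.2 j k h2, mul_zero]
        rw [hc, zero_mul]
      · have hx : (X : Matrix (Fin n) (Fin n) F) i j = 0 := X.2 i j haP
        rw [hx, mul_zero]
  rw [key]
  apply Submodule.sum_mem
  intro a _
  by_cases ha : a ∈ perpL P lam
  · rw [if_pos ha]
    exact Submodule.smul_mem _ _ (Submodule.subset_span ⟨a, ha, rfl⟩)
  · rw [if_neg ha]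
    exact Submodule.zero_mem _

lemma coord_mem_range {hC : IsClosedPositions P} (lam : Dual (patAlg n F P hC))
    (hqm : QuasiMonomial lam) {a : Fin n × Fin n} (ha : a ∈ perpL P lam) :
    coordFn (patAlg n F P hC) a ∈ LinearMap.range (Psi lam) := by
  obtain ⟨haP, k, hk, hjk⟩ := ha
  refine ⟨(lamEntry lam a.1 k)⁻¹ • elt hC hjk, ?_⟩
  apply LinearMap.ext; intro X
  show lam (X * ((lamEntry lam a.1 k)⁻¹ • elt hC hjk)) = (X : Matrix (Fin n) (Fin n) F) a.1 a.2
  rw [mul_smul_comm, map_smul, smul_eq_mul, lam_mul_elt_qm lam hqm X hk hjk,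
    ← mul_assoc, inv_mul_cancel₀ hk, one_mul]

lemma rmul_vanish {hC : IsClosedPositions P} (lam : Dual (patAlg n F P hC))
    (hqm : QuasiMonomial lam) {Y : ↥(patAlg n F P hC)}
    (hY : Y ∈ vanishOn (patAlg n F P hC) (perpL P lam))
    (g : ↥(grp (patAlg n F P hC))) :
    rmul Y g ∈ vanishOn (patAlg n F P hC) (perpL P lam) := by
  rw [mem_vanish_perpL_iff lam hqm] at hY ⊢
  intro Z
  have hmemZ : mat g * (Z : Matrix (Fin n) (Fin n) F) ∈ patAlg n F P hC := by
    have h : mat g * (Z : Matrix (Fin n) (Fin n) F)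
        = (Z : Matrix (Fin n) (Fin n) F) + (mat g - 1) * (Z : Matrix (Fin n) (Fin n) F) := by
      noncomm_ring
    rw [h]
    exact add_mem Z.2 (mul_mem (mat_mem g) Z.2)
  have h : rmul Y g * Z = Y * ⟨mat g * (Z : Matrix (Fin n) (Fin n) F), hmemZ⟩ := by
    apply Subtype.ext
    show ((Y : Matrix (Fin n) (Fin n) F) * mat g) * (Z : Matrix (Fin n) (Fin n) F)
      = (Y : Matrix (Fin n) (Fin n) F) * (mat g * (Z : Matrix (Fin n) (Fin n) F))
    rw [mul_assoc]
  rw [h]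
  exact hY _

lemma pow_entry_zero (M : Matrix (Fin n) (Fin n) F)
    (hM : ∀ i j : Fin n, ¬ (i : ℕ) < (j : ℕ) → M i j = 0) :
    ∀ (k : ℕ) (i j : Fin n), (j : ℕ) < (i : ℕ) + k → (M ^ k) i j = 0 := by
  intro k
  induction k with
  | zero =>
    intro i j hij
    rw [pow_zero]
    exact Matrix.one_apply_ne (fun hEq => by rw [hEq] at hij; omega)
  | succ k ih =>
    intro i j hij
    rw [pow_succ', Matrix.mul_apply]
    apply Finset.sum_eq_zero
    intro m _
    by_cases hm : (i : ℕ) < (m : ℕ)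
    · rw [ih m j (by omega), mul_zero]
    · rw [hM i m hm, zero_mul]

lemma isUnit_one_add_mem (hP : ∀ a ∈ P, a.1 < a.2) {hC : IsClosedPositions P}
    (w : ↥(patAlg n F P hC)) :
    IsUnit ((1 : Matrix (Fin n) (Fin n) F) + (w : Matrix (Fin n) (Fin n) F)) := by
  have hnil : IsNilpotent (w : Matrix (Fin n) (Fin n) F) := by
    refine ⟨n, ?_⟩
    ext i j
    rw [Matrix.zero_apply]
    refine pow_entry_zero _ ?_ n i j ?_
    · intro a b hab
      by_cases hmem : (a, b) ∈ P
      · exact absurd (hP (a, b) hmem) hab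
      · exact w.2 a b hmem
    · exact lt_of_lt_of_le j.isLt (Nat.le_add_left n i)
  exact hnil.isUnit_one_add

lemma mem_lC_one {A : Type*} [NonUnitalRing A] [Module F A] [SMulCommClass F A A]
    [IsScalarTower F A A] (nu : A →ₗ[F] F) (X : A) :
    X ∈ lC nu 1 ↔ ∀ Y : A, nu (X * Y) = 0 := by
  constructor
  · intro hX Y
    exact (show X ∈ lker nu ⊤ ⊤ from hX).2 Y trivial
  · intro hX
    exact (show X ∈ lker nu ⊤ ⊤ from ⟨trivial, fun Y _ => hX Y⟩)

lemma mem_sC_one {A : Type*} [NonUnitalRing A] [Module F A] [SMulCommClass F A A]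
    [IsScalarTower F A A] (nu : A →ₗ[F] F) (X : A) :
    X ∈ sC nu 1 ↔ ∀ Y : A, Y ∈ lC nu 1 → nu (X * Y) = 0 := by
  constructor
  · intro hX Y hY
    exact (show X ∈ lker nu ⊤ (lker nu ⊤ ⊤) from hX).2 Y hY
  · intro hX
    exact (show X ∈ lker nu ⊤ (lker nu ⊤ ⊤) from ⟨trivial, fun Y hY => hX Y hY⟩)

end Aux8c
/-- For a quasi-monomial `λ` on a pattern algebra: the right orbit `λG`
equals `λ + span{e*_{ij} : (i,j) ∈ ⊥L_λ}`, and for every `μ ∈ λG`, `l¹_μ` and `s¹_μ` are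
the subspaces of matrices vanishing on `⊥L_λ` and `⊥S_λ` respectively. -/
theorem statement8 (p : ℕ) (hp : p.Prime) (F : Type) [Field F] [Fintype F] [CharP F p]
    (n : ℕ) (P : Set (Fin n × Fin n)) (hP : ∀ a ∈ P, a.1 < a.2) (hC : IsClosedPositions P)
    (lam : Dual (patAlg n F P hC)) (hqm : QuasiMonomial lam) :
    rightOrbit lam = {nu | ∃ mu ∈ Submodule.span F
        (coordFn (patAlg n F P hC) '' perpL P lam), nu = lam + mu} ∧
    ∀ nu ∈ rightOrbit lam,
      lC nu 1 = vanishOn (patAlg n F P hC) (perpL P lam) ∧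
      sC nu 1 = vanishOn (patAlg n F P hC) (perpS P lam) := by
  constructor
  · ext nu
    constructor
    · rintro ⟨g, rfl⟩
      exact ⟨psiFun lam (gsub g⁻¹), psi_mem_span lam (gsub g⁻¹), conj_decomp lam g⁻¹⟩
    · rintro ⟨mu, hmu, rfl⟩
      have hle : Submodule.span F (coordFn (patAlg n F P hC) '' perpL P lam)
          ≤ LinearMap.range (Psi lam) := by
        rw [Submodule.span_le]
        rintro _ ⟨a, ha, rfl⟩
        exact coord_mem_range lam hqm ha
      obtain ⟨w, hw⟩ := hle hmu
      have hu := isUnit_one_add_mem hP w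
      have hg1 : ((hu.unit : (Matrix (Fin n) (Fin n) F)ˣ) : Matrix (Fin n) (Fin n) F) - 1
          ∈ patAlg n F P hC := by
        rw [IsUnit.unit_spec, add_sub_cancel_left]
        exact w.2
      refine ⟨(⟨hu.unit, hg1⟩ : ↥(grp (patAlg n F P hC)))⁻¹, ?_⟩
      rw [inv_inv]
      have hgs : gsub (⟨hu.unit, hg1⟩ : ↥(grp (patAlg n F P hC))) = w := by
        apply Subtype.ext
        show ((hu.unit : (Matrix (Fin n) (Fin n) F)ˣ) : Matrix (Fin n) (Fin n) F) - 1
          = (w : Matrix (Fin n) (Fin n) F)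
        rw [IsUnit.unit_spec, add_sub_cancel_left]
      have hw' : psiFun lam w = mu := hw
      rw [conj_decomp lam, hgs, hw']
  · rintro nu ⟨g, rfl⟩
    have hlC : lC (conjDual 1 g⁻¹ lam) 1 = vanishOn (patAlg n F P hC) (perpL P lam) := by
      ext X
      rw [mem_lC_one]
      constructor
      · intro hX a ha
        obtain ⟨haP, k, hk, hjk⟩ := ha
        have h0 := hX (rmul (elt hC hjk) (g⁻¹)⁻¹)
        rw [conj_eval, rmul_inv_rmul, lam_mul_elt_qm lam hqm X hk hjk] at h0
        exact (mul_eq_zero.mp h0).resolve_left hk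
      · intro hX Y
        rw [conj_eval]
        exact vanish_perpL_mul lam hX _
    refine ⟨hlC, ?_⟩
    ext X
    rw [mem_sC_one]
    simp only [hlC]
    constructor
    · intro hX a ha
      obtain ⟨haP, k, hk, hjk, hnotL⟩ := ha
      have he : elt hC hjk ∈ vanishOn (patAlg n F P hC) (perpL P lam) := by
        intro b hb
        show (if a.2 = b.1 ∧ k = b.2 then (1 : F) else 0) = 0
        rw [if_neg]
        rintro ⟨h1, h2⟩
        exact hnotL (by rw [h1, h2]; exact hb)
      have h0 := hX (rmul (elt hC hjk) (g⁻¹)⁻¹) (rmul_vanish lam hqm he (g⁻¹)⁻¹)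
      rw [conj_eval, rmul_inv_rmul, lam_mul_elt_qm lam hqm X hk hjk] at h0
      exact (mul_eq_zero.mp h0).resolve_left hk
    · intro hX Y hY
      rw [conj_eval]
      exact vanish_perpS_mul lam hX (rmul_vanish lam hqm hY g⁻¹)

end Paper
end
end

section
/- Let n > 1 and let p be the characteristic of F_q. The exponential Kirillov function ψ^Exp_κ of A_n(q), given by ψ^Exp_κ(Exp(X)) = θ(X_{1,n}) for X ∈ a_n(q), is a character of A_n(q) if and only if n ≤ p (equivalently, Exp(X) ↦ θ(X_{1,n}) is a group homomorphism A_n(q) → ℂ^× if and only if n ≤ p). -/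
open scoped BigOperators Classical ComplexOrder
open Complex

set_option linter.unusedSectionVars false

noncomputable section

namespace Paper

variable {F : Type*} [Field F]

/-! ### Algebra groups of matrix algebras -/

variable {n : ℕ}

variable [Fintype F] {S : NonUnitalSubalgebra F (Matrix (Fin n) (Fin n) F)}

/-- The functional `κ ∈ a_n(q)*`, `κ(X) = X_{1,n}`. -/
def kappaDual (n : ℕ) (hn : 1 < n) (F : Type) [Field F] [Fintype F] : Dual (aAlg n F) :=
  coordFn (aAlg n F) (⟨0, by omega⟩, ⟨n - 1, by omega⟩)

/-! ### Auxiliary infrastructure for Statement 12 -/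

section Statement12Aux

variable {n : ℕ} {F : Type} [Field F] [Fintype F]

/-- The matrix with ones on the `k`-th superdiagonal. -/
def EM (n : ℕ) (F : Type) [Field F] (k : ℕ) : Matrix (Fin n) (Fin n) F :=
  fun i j => if (i : ℕ) + k = (j : ℕ) then 1 else 0

lemma EM_zero : EM n F 0 = 1 := by
  ext i j
  simp only [EM, add_zero, Matrix.one_apply, Fin.val_eq_val]

lemma EM_mul (k l : ℕ) : EM n F k * EM n F l = EM n F (k + l) := by
  ext i j
  rw [Matrix.mul_apply]
  simp only [EM]
  by_cases h : (i : ℕ) + (k + l) = (j : ℕ)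
  · rw [if_pos h]
    have hj := j.isLt
    have hkn : (i : ℕ) + k < n := by omega
    rw [Finset.sum_eq_single (⟨(i : ℕ) + k, hkn⟩ : Fin n)]
    · rw [if_pos (by simp), if_pos (by simp; omega), one_mul]
    · intro b _ hb
      rw [if_neg, zero_mul]
      intro hc
      exact hb (Fin.ext (by simp [← hc]))
    · intro h'; exact absurd (Finset.mem_univ _) h'
  · rw [if_neg h]
    refine Finset.sum_eq_zero fun b _ => ?_
    by_cases h1 : (i : ℕ) + k = (b : ℕ)
    · rw [if_pos h1, one_mul, if_neg (by omega)]
    · rw [if_neg h1, zero_mul]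

lemma EM_pow (k i : ℕ) : EM n F k ^ i = EM n F (k * i) := by
  induction i with
  | zero => rw [pow_zero, Nat.mul_zero, EM_zero]
  | succ i ih => rw [pow_succ, ih, EM_mul, Nat.mul_succ]

lemma EM_eq_zero {k : ℕ} (h : n ≤ k) : EM n F k = 0 := by
  ext i j
  have hj := j.isLt
  simp only [EM, Matrix.zero_apply]
  rw [if_neg (by omega)]

lemma EM_mem {k : ℕ} (hk : 1 ≤ k) : EM n F k ∈ aAlg n F := by
  rw [mem_aAlg]
  constructor
  · intro i j hij
    rw [Fin.le_def] at hij
    simp only [EM]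
    rw [if_neg (by omega)]
  · intro i j i' j' h1 h2 h3
    simp only [EM]
    by_cases h : (i : ℕ) + k = j
    · rw [if_pos h, if_pos (by omega)]
    · rw [if_neg h, if_neg (by omega)]

/-- `M` vanishes strictly below the `k`-th superdiagonal. -/
def Upper (k : ℕ) (M : Matrix (Fin n) (Fin n) F) : Prop :=
  ∀ i j : Fin n, (j : ℕ) < (i : ℕ) + k → M i j = 0

lemma Upper.mono {k l : ℕ} {M : Matrix (Fin n) (Fin n) F} (h : Upper k M) (hlk : l ≤ k) :
    Upper l M := fun i j hj => h i j (by omega)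

lemma Upper.mul {k l : ℕ} {M N : Matrix (Fin n) (Fin n) F} (hM : Upper k M) (hN : Upper l N) :
    Upper (k + l) (M * N) := by
  intro i j hj
  rw [Matrix.mul_apply]
  refine Finset.sum_eq_zero fun b _ => ?_
  by_cases hb : (b : ℕ) < (i : ℕ) + k
  · rw [hM i b hb, zero_mul]
  · rw [hN b j (by omega), mul_zero]

lemma upper_one : Upper 0 (1 : Matrix (Fin n) (Fin n) F) := by
  intro i j hj
  exact Matrix.one_apply_ne (by rintro rfl; omega)

lemma upper_zero (k : ℕ) : Upper k (0 : Matrix (Fin n) (Fin n) F) := fun i j _ => rfl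

lemma Upper.pow {k : ℕ} {M : Matrix (Fin n) (Fin n) F} (h : Upper k M) :
    ∀ i, Upper (k * i) (M ^ i)
  | 0 => by rw [pow_zero, Nat.mul_zero]; exact upper_one
  | (i + 1) => by rw [pow_succ, Nat.mul_succ]; exact (Upper.pow h i).mul h

lemma Upper.smul {k : ℕ} {c : F} {M : Matrix (Fin n) (Fin n) F} (h : Upper k M) :
    Upper k (c • M) := fun i j hj => by rw [Matrix.smul_apply, h i j hj, smul_zero]

lemma Upper.add {k : ℕ} {M N : Matrix (Fin n) (Fin n) F} (hM : Upper k M) (hN : Upper k N) :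
    Upper k (M + N) := fun i j hj => by
  rw [Matrix.add_apply, hM i j hj, hN i j hj, add_zero]

lemma Upper.sum {k : ℕ} {ι : Type*} {s : Finset ι} {f : ι → Matrix (Fin n) (Fin n) F}
    (h : ∀ i ∈ s, Upper k (f i)) : Upper k (∑ i ∈ s, f i) := fun i j hj => by
  rw [Matrix.sum_apply]
  exact Finset.sum_eq_zero fun b hb => h b hb i j hj

lemma Upper.eq_zero {k : ℕ} (hk : n ≤ k) {M : Matrix (Fin n) (Fin n) F} (h : Upper k M) :
    M = 0 := by
  ext i j
  have := j.isLt
  rw [Matrix.zero_apply]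
  exact h i j (by omega)

lemma upper_of_mem {M : Matrix (Fin n) (Fin n) F} (hM : M ∈ aAlg n F) : Upper 1 M :=
  fun i j hj => hM.1 i j (by rw [Fin.le_def]; omega)

lemma upper_EM (k : ℕ) : Upper k (EM n F k) := by
  intro i j hj
  simp only [EM]
  rw [if_neg (by omega)]

lemma pow_mem_aAlg {M : Matrix (Fin n) (Fin n) F} (hM : M ∈ aAlg n F) :
    ∀ i, 1 ≤ i → M ^ i ∈ aAlg n F := by
  intro i
  induction i with
  | zero => omega
  | succ i ih =>
      intro _
      rcases Nat.eq_zero_or_pos i with rfl | hi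
      · rwa [pow_one]
      · rw [pow_succ]; exact mul_mem (ih hi) hM

/-- The truncated exponential. -/
def expM (p : ℕ) (X : Matrix (Fin n) (Fin n) F) : Matrix (Fin n) (Fin n) F :=
  ∑ i ∈ Finset.range p, (Nat.factorial i : F)⁻¹ • X ^ i

lemma expM_eq_one_add {p : ℕ} (hp : 0 < p) (X : Matrix (Fin n) (Fin n) F) :
    expM p X = 1 + ∑ i ∈ Finset.Ico 1 p, (Nat.factorial i : F)⁻¹ • X ^ i := by
  unfold expM
  rw [Finset.range_eq_Ico, Finset.sum_eq_sum_Ico_succ_bot hp]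
  simp

lemma expM_zero {p : ℕ} (hp : 0 < p) : expM p (0 : Matrix (Fin n) (Fin n) F) = 1 := by
  rw [expM_eq_one_add hp]
  rw [Finset.sum_eq_zero, add_zero]
  intro i hi
  rw [zero_pow (by rcases Finset.mem_Ico.mp hi with ⟨h1, _⟩; omega), smul_zero]

lemma cast_factorial_ne_zero {p : ℕ} [CharP F p] (hp : p.Prime) {i : ℕ} (hi : i < p) :
    (Nat.factorial i : F) ≠ 0 := by
  rw [Ne, CharP.cast_eq_zero_iff F p]
  intro hdvd
  have := (Nat.Prime.dvd_factorial hp).mp hdvd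
  omega


lemma aAlg_mul_comm {X Y : Matrix (Fin n) (Fin n) F} (hX : X ∈ aAlg n F) (hY : Y ∈ aAlg n F) :
    X * Y = Y * X := by
  obtain ⟨hXu, hXc⟩ := mem_aAlg.mp hX
  obtain ⟨hYu, hYc⟩ := mem_aAlg.mp hY
  ext i j
  rw [Matrix.mul_apply, Matrix.mul_apply]
  have h1 : ∀ k : Fin n, ¬((i : ℕ) < (k : ℕ) ∧ (k : ℕ) < (j : ℕ)) → X i k * Y k j = 0 := by
    intro k hk
    by_cases h : (i : ℕ) < (k : ℕ)
    · have hjk : j ≤ k := by rw [Fin.le_def]; omega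
      rw [hYu k j hjk, mul_zero]
    · have hki : k ≤ i := by rw [Fin.le_def]; omega
      rw [hXu i k hki, zero_mul]
  have h2 : ∀ k : Fin n, ¬((i : ℕ) < (k : ℕ) ∧ (k : ℕ) < (j : ℕ)) → Y i k * X k j = 0 := by
    intro k hk
    by_cases h : (i : ℕ) < (k : ℕ)
    · have hjk : j ≤ k := by rw [Fin.le_def]; omega
      rw [hXu k j hjk, mul_zero]
    · have hki : k ≤ i := by rw [Fin.le_def]; omega
      rw [hYu i k hki, zero_mul]
  have e1 : ∑ k : Fin n, X i k * Y k j
      = ∑ k ∈ Finset.univ.filter (fun k : Fin n => (i : ℕ) < (k : ℕ) ∧ (k : ℕ) < (j : ℕ)),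
        X i k * Y k j := by
    refine (Finset.sum_filter_of_ne fun k _ hk => ?_).symm
    by_contra hp
    exact hk (h1 k hp)
  have e2 : ∑ k : Fin n, Y i k * X k j
      = ∑ k ∈ Finset.univ.filter (fun k : Fin n => (i : ℕ) < (k : ℕ) ∧ (k : ℕ) < (j : ℕ)),
        Y i k * X k j := by
    refine (Finset.sum_filter_of_ne fun k _ hk => ?_).symm
    by_contra hp
    exact hk (h2 k hp)
  rw [e1, e2]
  have hjn := j.isLt
  refine Finset.sum_bij'
    (fun (k : Fin n) (hk : k ∈ Finset.univ.filter
        (fun k : Fin n => (i : ℕ) < (k : ℕ) ∧ (k : ℕ) < (j : ℕ))) =>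
      (⟨(i : ℕ) + (j : ℕ) - (k : ℕ), by
        have h1 := (Finset.mem_filter.mp hk).2
        omega⟩ : Fin n))
    (fun (k : Fin n) (hk : k ∈ Finset.univ.filter
        (fun k : Fin n => (i : ℕ) < (k : ℕ) ∧ (k : ℕ) < (j : ℕ))) =>
      (⟨(i : ℕ) + (j : ℕ) - (k : ℕ), by
        have h1 := (Finset.mem_filter.mp hk).2
        omega⟩ : Fin n))
    ?_ ?_ ?_ ?_ ?_
  · intro k hk
    have h1 := (Finset.mem_filter.mp hk).2
    simp only [Finset.mem_filter, Finset.mem_univ, true_and, Fin.val_mk]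
    omega
  · intro k hk
    have h1 := (Finset.mem_filter.mp hk).2
    simp only [Finset.mem_filter, Finset.mem_univ, true_and, Fin.val_mk]
    omega
  · intro k hk
    have h1 := (Finset.mem_filter.mp hk).2
    exact Fin.ext (by simp only [Fin.val_mk]; omega)
  · intro k hk
    have h1 := (Finset.mem_filter.mp hk).2
    exact Fin.ext (by simp only [Fin.val_mk]; omega)
  · intro k hk
    have h1 := (Finset.mem_filter.mp hk).2
    have hx : X i k = X (⟨(i : ℕ) + (j : ℕ) - (k : ℕ), by omega⟩ : Fin n) j := by
      refine hXc i k _ j h1.1 ?_ ?_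
      · simp only [Fin.val_mk]; omega
      · simp only [Fin.val_mk]; omega
    have hy : Y k j = Y i (⟨(i : ℕ) + (j : ℕ) - (k : ℕ), by omega⟩ : Fin n) := by
      refine hYc k j i _ h1.2 ?_ ?_
      · simp only [Fin.val_mk]; omega
      · simp only [Fin.val_mk]; omega
    rw [hx, hy]
    ring

lemma factorial_coeff {p : ℕ} [CharP F p] (hp : p.Prime) {i j : ℕ} (hi : i < p) (hj : j < p)
    (hij : i + j < p) :
    ((i + j).factorial : F)⁻¹ * ((i + j).choose i : F) = ((i.factorial : F) * j.factorial)⁻¹ := by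
  have hnat : (i + j).choose i * i.factorial * j.factorial = (i + j).factorial := by
    have := Nat.choose_mul_factorial_mul_factorial (Nat.le_add_right i j)
    rwa [Nat.add_sub_cancel_left] at this
  have hcast : ((i + j).choose i : F) * ((i.factorial : F) * j.factorial)
      = ((i + j).factorial : F) := by
    rw [← hnat]
    push_cast
    ring
  have hA : ((i.factorial : F) * j.factorial) ≠ 0 :=
    mul_ne_zero (cast_factorial_ne_zero hp hi) (cast_factorial_ne_zero hp hj)
  have hC : ((i + j).choose i : F) ≠ 0 := by
    intro h0
    rw [h0, zero_mul] at hcast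
    exact cast_factorial_ne_zero hp hij hcast.symm
  rw [← hcast, mul_inv, mul_right_comm, inv_mul_cancel₀ hC, one_mul]

lemma expM_mul_expM {p : ℕ} [CharP F p] (hp : p.Prime) {X Y : Matrix (Fin n) (Fin n) F}
    (hc : Commute X Y) :
    expM p X * expM p Y = expM p (X + Y) +
      ∑ ij ∈ (Finset.range p ×ˢ Finset.range p).filter (fun ij => p ≤ ij.1 + ij.2),
        ((ij.1.factorial : F) * (ij.2.factorial : F))⁻¹ • (X ^ ij.1 * Y ^ ij.2) := by
  have lhs : expM p X * expM p Y
      = ∑ ij ∈ Finset.range p ×ˢ Finset.range p,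
        ((ij.1.factorial : F) * (ij.2.factorial : F))⁻¹ • (X ^ ij.1 * Y ^ ij.2) := by
    unfold expM
    rw [Finset.sum_mul_sum, ← Finset.sum_product']
    refine Finset.sum_congr rfl fun ij _ => ?_
    rw [smul_mul_smul_comm, mul_inv]
  have hmid : expM p (X + Y)
      = ∑ ij ∈ (Finset.range p ×ˢ Finset.range p).filter (fun ij => ¬ p ≤ ij.1 + ij.2),
        ((ij.1.factorial : F) * (ij.2.factorial : F))⁻¹ • (X ^ ij.1 * Y ^ ij.2) := by
    unfold expM
    have step : ∀ k ∈ Finset.range p, (k.factorial : F)⁻¹ • (X + Y) ^ k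
        = ∑ ij ∈ Finset.HasAntidiagonal.antidiagonal k,
            ((ij.1.factorial : F) * (ij.2.factorial : F))⁻¹ • (X ^ ij.1 * Y ^ ij.2) := by
      intro k hk
      rw [Finset.mem_range] at hk
      rw [hc.add_pow', Finset.smul_sum]
      refine Finset.sum_congr rfl fun ij hij => ?_
      rw [Finset.HasAntidiagonal.mem_antidiagonal] at hij
      rw [← Nat.cast_smul_eq_nsmul F, smul_smul]
      subst hij
      rw [factorial_coeff hp (by omega) (by omega) hk]
    rw [Finset.sum_congr rfl step, Finset.sum_sigma']
    refine Finset.sum_bij'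
      (fun (x : Σ _ : ℕ, ℕ × ℕ) (_ : x ∈ (Finset.range p).sigma
          (fun k => Finset.HasAntidiagonal.antidiagonal k)) => x.2)
      (fun (ij : ℕ × ℕ) (_ : ij ∈ (Finset.range p ×ˢ Finset.range p).filter
          (fun ij => ¬ p ≤ ij.1 + ij.2)) => (⟨ij.1 + ij.2, ij⟩ : Σ _ : ℕ, ℕ × ℕ))
      ?_ ?_ ?_ ?_ ?_
    · intro x hx
      rw [Finset.mem_sigma] at hx
      obtain ⟨hx1, hx2⟩ := hx
      rw [Finset.mem_range] at hx1
      rw [Finset.HasAntidiagonal.mem_antidiagonal] at hx2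
      simp only [Finset.mem_filter, Finset.mem_product, Finset.mem_range]
      omega
    · intro ij hij
      simp only [Finset.mem_filter, Finset.mem_product, Finset.mem_range] at hij
      simp only [Finset.mem_sigma, Finset.mem_range, Finset.HasAntidiagonal.mem_antidiagonal]
      exact ⟨by omega, trivial⟩
    · intro x hx
      rw [Finset.mem_sigma] at hx
      obtain ⟨_, hx2⟩ := hx
      rw [Finset.HasAntidiagonal.mem_antidiagonal] at hx2
      exact Sigma.ext hx2 (heq_of_eq rfl)
    · intro ij hij
      rfl
    · intro x hx
      rfl
  rw [lhs, hmid, ← Finset.sum_filter_add_sum_filter_not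
    (Finset.range p ×ˢ Finset.range p) (fun ij => p ≤ ij.1 + ij.2), add_comm]



lemma expM_tail_mem {p : ℕ} {X : Matrix (Fin n) (Fin n) F} (hX : X ∈ aAlg n F) :
    (∑ i ∈ Finset.Ico 1 p, (Nat.factorial i : F)⁻¹ • X ^ i) ∈ aAlg n F :=
  sum_mem fun i hi => SMulMemClass.smul_mem _ (pow_mem_aAlg hX i (Finset.mem_Ico.mp hi).1)

lemma expM_sub_one_mem {p : ℕ} (hp : 0 < p) {X : Matrix (Fin n) (Fin n) F}
    (hX : X ∈ aAlg n F) : expM p X - 1 ∈ aAlg n F := by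
  rw [expM_eq_one_add hp, add_sub_cancel_left]
  exact expM_tail_mem hX

lemma pow_n_eq_zero {X : Matrix (Fin n) (Fin n) F} (hX : X ∈ aAlg n F) : X ^ n = 0 :=
  Upper.eq_zero (by omega) ((upper_of_mem hX).pow n)

lemma exists_grp_elem {p : ℕ} (hp : 0 < p) {X : Matrix (Fin n) (Fin n) F}
    (hX : X ∈ aAlg n F) : ∃ g : ↥(grp (aAlg n F)), mat g = expM p X := by
  have hT : expM p X - 1 ∈ aAlg n F := expM_sub_one_mem hp hX
  have hnil : IsNilpotent (expM p X - 1) := ⟨n, pow_n_eq_zero hT⟩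
  have heq : (1 : Matrix (Fin n) (Fin n) F) + (expM p X - 1) = expM p X := by noncomm_ring
  have hu : IsUnit (expM p X) := by
    have h := hnil.isUnit_one_add
    rwa [heq] at h
  refine ⟨⟨hu.unit, ?_⟩, ?_⟩
  · rw [mem_grp_iff, IsUnit.unit_spec]
    exact hT
  · exact hu.unit_spec

lemma geom_inv {M : Matrix (Fin n) (Fin n) F} (hM : M ^ n = 0) :
    (1 + M) * (∑ k ∈ Finset.range n, (-M) ^ k) = 1 := by
  have h2 : ((-M) - 1) * (∑ k ∈ Finset.range n, (-M) ^ k) = (-M) ^ n - 1 :=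
    mul_geom_sum (-M) n
  have h3 : (-M) ^ n = (0 : Matrix (Fin n) (Fin n) F) := by rw [neg_pow, hM, mul_zero]
  rw [h3, zero_sub] at h2
  have h4 : (1 + M) * (∑ k ∈ Finset.range n, (-M) ^ k)
      = -(((-M) - 1) * ∑ k ∈ Finset.range n, (-M) ^ k) := by noncomm_ring
  rw [h4, h2, neg_neg]

lemma expM_add {p : ℕ} [CharP F p] (hp : p.Prime) (hnp : n ≤ p)
    {X Y : Matrix (Fin n) (Fin n) F} (hX : X ∈ aAlg n F) (hY : Y ∈ aAlg n F) :
    expM p X * expM p Y = expM p (X + Y) := by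
  rw [expM_mul_expM hp (aAlg_mul_comm hX hY), Finset.sum_eq_zero, add_zero]
  intro ij hij
  simp only [Finset.mem_filter, Finset.mem_product, Finset.mem_range] at hij
  have h1 : Upper (1 * ij.1 + 1 * ij.2) (X ^ ij.1 * Y ^ ij.2) :=
    ((upper_of_mem hX).pow ij.1).mul ((upper_of_mem hY).pow ij.2)
  rw [Upper.eq_zero (by omega) h1, smul_zero]

lemma expM_surj_aux {p : ℕ} [CharP F p] (hp : p.Prime) (hnp : n ≤ p) (hn0 : 0 < n) :
    ∀ k d : ℕ, n ≤ d + k → 1 ≤ d → ∀ N ∈ aAlg n F, Upper d N →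
      ∃ X ∈ aAlg n F, Upper d X ∧ expM p X = 1 + N := by
  intro k
  induction k with
  | zero =>
      intro d hnd hd N hN hUd
      refine ⟨0, zero_mem _, upper_zero d, ?_⟩
      rw [expM_zero hp.pos, Upper.eq_zero (by omega) hUd, add_zero]
  | succ k ih =>
      intro d hnd hd N hN hUd
      set T := ∑ i ∈ Finset.Ico 1 p, (Nat.factorial i : F)⁻¹ • N ^ i with hTdef
      have hTmem : T ∈ aAlg n F := expM_tail_mem hN
      have hTU : Upper d T := by
        refine Upper.sum fun i hi => ?_
        obtain ⟨h1, _⟩ := Finset.mem_Ico.mp hi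
        exact ((hUd.pow i).mono (Nat.le_mul_of_pos_right d h1)).smul
      have hE : expM p N = 1 + T := expM_eq_one_add hp.pos N
      have hR : Upper (2 * d) (N - T) := by
        have hsplit : T = N + ∑ i ∈ Finset.Ico 2 p, (Nat.factorial i : F)⁻¹ • N ^ i := by
          rw [hTdef, Finset.sum_eq_sum_Ico_succ_bot hp.two_le]
          simp
        have hRtail : Upper (2 * d) (∑ i ∈ Finset.Ico 2 p, (Nat.factorial i : F)⁻¹ • N ^ i) := by
          refine Upper.sum fun i hi => ?_
          obtain ⟨h2, _⟩ := Finset.mem_Ico.mp hi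
          refine ((hUd.pow i).mono ?_).smul
          have := Nat.mul_le_mul_left d h2
          omega
        have : N - T = -(∑ i ∈ Finset.Ico 2 p, (Nat.factorial i : F)⁻¹ • N ^ i) := by
          rw [hsplit]; abel
        rw [this]
        intro i j hj
        rw [Matrix.neg_apply, hRtail i j hj, neg_zero]
      set V := ∑ k ∈ Finset.range n, (-T) ^ k with hVdef
      have hgeom : (1 + T) * V = 1 := geom_inv (pow_n_eq_zero hTmem)
      set S := V * (N - T) with hSdef
      have hVsplit : V = 1 + ∑ k ∈ Finset.Ico 1 n, (-T) ^ k := by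
        rw [hVdef, Finset.range_eq_Ico, Finset.sum_eq_sum_Ico_succ_bot (by omega : 0 < n)]
        simp
      have hV'mem : (∑ k ∈ Finset.Ico 1 n, (-T) ^ k) ∈ aAlg n F := by
        refine sum_mem fun i hi => ?_
        exact pow_mem_aAlg (neg_mem hTmem) i (Finset.mem_Ico.mp hi).1
      have hSmem : S ∈ aAlg n F := by
        have : S = (N - T) + (∑ k ∈ Finset.Ico 1 n, (-T) ^ k) * (N - T) := by
          rw [hSdef, hVsplit]; noncomm_ring
        rw [this]
        exact add_mem (sub_mem hN hTmem) (mul_mem hV'mem (sub_mem hN hTmem))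
      have hSU : Upper (2 * d) S := by
        have h1 : Upper (2 * d) ((∑ k ∈ Finset.Ico 1 n, (-T) ^ k) * (N - T)) := by
          have h2 : Upper (1 + 2 * d) ((∑ k ∈ Finset.Ico 1 n, (-T) ^ k) * (N - T)) :=
            (upper_of_mem hV'mem).mul hR
          exact h2.mono (by omega)
        have : S = (N - T) + (∑ k ∈ Finset.Ico 1 n, (-T) ^ k) * (N - T) := by
          rw [hSdef, hVsplit]; noncomm_ring
        rw [this]
        exact hR.add h1
      obtain ⟨Y, hYmem, hYU, hYexp⟩ :=
        ih (2 * d) (by omega) (by omega) S hSmem hSU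
      refine ⟨N + Y, add_mem hN hYmem, hUd.add (hYU.mono (by omega)), ?_⟩
      rw [← expM_add hp hnp hN hYmem, hYexp, hE]
      calc (1 + T) * (1 + V * (N - T))
          = (1 + T) + ((1 + T) * V) * (N - T) := by noncomm_ring
        _ = (1 + T) + 1 * (N - T) := by rw [hgeom]
        _ = 1 + N := by noncomm_ring

lemma expM_surjective {p : ℕ} [CharP F p] (hp : p.Prime) (hnp : n ≤ p) (hn0 : 0 < n)
    {N : Matrix (Fin n) (Fin n) F} (hN : N ∈ aAlg n F) :
    ∃ X ∈ aAlg n F, expM p X = 1 + N := by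
  obtain ⟨X, hX, _, hexp⟩ :=
    expM_surj_aux hp hnp hn0 n 1 (by omega) (by omega) N hN (upper_of_mem hN)
  exact ⟨X, hX, hexp⟩



lemma socle_pow {W U : Matrix (Fin n) (Fin n) F} (h1 : W * U = 0) (h2 : U * W = 0)
    (h3 : U * U = 0) : ∀ k, (W + U) ^ (k + 2) = W ^ (k + 2) := by
  have hWkU : ∀ k, W ^ (k + 1) * U = 0 := by
    intro k
    induction k with
    | zero => simpa using h1
    | succ k ih => rw [pow_succ, mul_assoc, h1, mul_zero]
  intro k
  induction k with
  | zero =>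
      have e : (W + U) ^ 2 = W ^ 2 + (W * U + (U * W + U * U)) := by noncomm_ring
      rw [e, h1, h2, h3, add_zero, add_zero, add_zero]
  | succ k ih =>
      have e : (W + U) ^ (k + 1 + 2) = (W + U) ^ (k + 2) * (W + U) := by
        rw [← pow_succ]
      rw [e, ih, mul_add, hWkU (k + 1), add_zero, ← pow_succ]

lemma expM_socle {p : ℕ} (hp : 2 ≤ p) {W U : Matrix (Fin n) (Fin n) F}
    (h1 : W * U = 0) (h2 : U * W = 0) (h3 : U * U = 0) :
    expM p (W + U) = expM p W + U := by
  unfold expM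
  have hstep : ∀ k ∈ Finset.range p, (Nat.factorial k : F)⁻¹ • (W + U) ^ k
      = (Nat.factorial k : F)⁻¹ • W ^ k + (if k = 1 then U else 0) := by
    intro k _
    match k with
    | 0 => simp
    | 1 => simp [pow_one]
    | (k + 2) => rw [socle_pow h1 h2 h3 k, if_neg (by omega), add_zero]
  rw [Finset.sum_congr rfl hstep, Finset.sum_add_distrib]
  congr 1
  rw [Finset.sum_ite_eq' (Finset.range p) 1 (fun _ => U)]
  rw [if_pos (Finset.mem_range.mpr (by omega))]

lemma witness_key {p : ℕ} [CharP F p] (hp : p.Prime) {m s t : ℕ} (hm : n = m + 1)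
    (ht : 1 ≤ t) (hts : t ≤ s) (hst : s + (p - 1) * t = m) (a b : F) :
    expM p (a • EM n F s) * expM p (b • EM n F t)
      = expM p (a • EM n F s + b • EM n F t +
          (∑ ij ∈ (Finset.range p ×ˢ Finset.range p).filter
              (fun ij => p ≤ ij.1 + ij.2 ∧ s * ij.1 + t * ij.2 = m),
            ((ij.1.factorial : F) * (ij.2.factorial : F))⁻¹ * (a ^ ij.1 * b ^ ij.2)) •
          EM n F m) := by
  have hp2 : 2 ≤ p := hp.two_le
  have hm2 : 2 ≤ m := by
    have h1 : 1 * 1 ≤ (p - 1) * t := Nat.mul_le_mul (by omega) ht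
    omega
  have hs1 : 1 ≤ s := le_trans ht hts
  have hcomm : Commute (a • EM n F s) (b • EM n F t) := by
    have h0 : Commute (EM n F s) (EM n F t) := by
      show EM n F s * EM n F t = EM n F t * EM n F s
      rw [EM_mul, EM_mul, Nat.add_comm]
    exact (h0.smul_left a).smul_right b
  rw [expM_mul_expM hp hcomm]
  set c : F := ∑ ij ∈ (Finset.range p ×ˢ Finset.range p).filter
      (fun ij => p ≤ ij.1 + ij.2 ∧ s * ij.1 + t * ij.2 = m),
    ((ij.1.factorial : F) * (ij.2.factorial : F))⁻¹ * (a ^ ij.1 * b ^ ij.2) with hcdef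
  have hW : Upper 1 (a • EM n F s + b • EM n F t) :=
    (((upper_EM s).mono hs1).smul).add (((upper_EM t).mono ht).smul)
  have hU : Upper m ((c • EM n F m : Matrix (Fin n) (Fin n) F)) := (upper_EM m).smul
  have hWU : (a • EM n F s + b • EM n F t) * (c • EM n F m) = 0 :=
    Upper.eq_zero (by omega) (hW.mul hU)
  have hUW : (c • EM n F m) * (a • EM n F s + b • EM n F t) = 0 :=
    Upper.eq_zero (by omega) (hU.mul hW)
  have hUU : ((c • EM n F m : Matrix (Fin n) (Fin n) F)) * (c • EM n F m) = 0 :=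
    Upper.eq_zero (by omega) (hU.mul hU)
  rw [expM_socle hp2 hWU hUW hUU]
  congr 1
  -- correction sum = c • EM n F m
  have hterm : ∀ ij : ℕ × ℕ,
      ((ij.1.factorial : F) * (ij.2.factorial : F))⁻¹ •
          ((a • EM n F s) ^ ij.1 * (b • EM n F t) ^ ij.2)
      = (((ij.1.factorial : F) * (ij.2.factorial : F))⁻¹ * (a ^ ij.1 * b ^ ij.2)) •
          EM n F (s * ij.1 + t * ij.2) := by
    intro ij
    rw [smul_pow, smul_pow, EM_pow, EM_pow, smul_mul_smul_comm, EM_mul, smul_smul]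
  rw [Finset.sum_congr rfl (fun ij _ => hterm ij)]
  rw [← Finset.sum_filter_add_sum_filter_not
    ((Finset.range p ×ˢ Finset.range p).filter (fun ij => p ≤ ij.1 + ij.2))
    (fun ij => s * ij.1 + t * ij.2 = m)]
  have hzero : ∑ ij ∈ ((Finset.range p ×ˢ Finset.range p).filter
      (fun ij => p ≤ ij.1 + ij.2)).filter (fun ij => ¬ s * ij.1 + t * ij.2 = m),
      (((ij.1.factorial : F) * (ij.2.factorial : F))⁻¹ * (a ^ ij.1 * b ^ ij.2)) •
        EM n F (s * ij.1 + t * ij.2) = 0 := by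
    refine Finset.sum_eq_zero fun ij hij => ?_
    simp only [Finset.mem_filter, Finset.mem_product, Finset.mem_range] at hij
    obtain ⟨⟨⟨hi, hj⟩, hple⟩, hne⟩ := hij
    have hi1 : 1 ≤ ij.1 := by omega
    obtain ⟨i', hi'⟩ : ∃ i', ij.1 = i' + 1 := ⟨ij.1 - 1, by omega⟩
    have e1 : s * ij.1 = s * i' + s := by rw [hi', Nat.mul_succ]
    have c1 : t * i' ≤ s * i' := Nat.mul_le_mul_right i' hts
    have c2 : (p - 1) * t ≤ (i' + ij.2) * t := Nat.mul_le_mul_right t (by omega)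
    have c3 : (i' + ij.2) * t = i' * t + ij.2 * t := Nat.add_mul i' ij.2 t
    have c4 : i' * t = t * i' := Nat.mul_comm _ _
    have c5 : ij.2 * t = t * ij.2 := Nat.mul_comm _ _
    have hge : n ≤ s * ij.1 + t * ij.2 := by omega
    rw [EM_eq_zero hge, smul_zero]
  rw [hzero, add_zero, Finset.filter_filter]
  have hEMm : ∀ ij ∈ (Finset.range p ×ˢ Finset.range p).filter
      (fun ij => p ≤ ij.1 + ij.2 ∧ s * ij.1 + t * ij.2 = m),
      (((ij.1.factorial : F) * (ij.2.factorial : F))⁻¹ * (a ^ ij.1 * b ^ ij.2)) •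
        EM n F (s * ij.1 + t * ij.2)
      = (((ij.1.factorial : F) * (ij.2.factorial : F))⁻¹ * (a ^ ij.1 * b ^ ij.2)) •
        EM n F m := by
    intro ij hij
    simp only [Finset.mem_filter, Finset.mem_product, Finset.mem_range] at hij
    rw [hij.2.2]
  rw [Finset.sum_congr rfl hEMm, ← Finset.sum_smul]



lemma filter_singleton_case {p m s : ℕ} (hp : 2 ≤ p) (hs2 : 2 ≤ s) (hm : s + (p - 1) = m) :
    (Finset.range p ×ˢ Finset.range p).filter
      (fun ij => p ≤ ij.1 + ij.2 ∧ s * ij.1 + 1 * ij.2 = m) = {(1, p - 1)} := by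
  ext ij
  obtain ⟨i, j⟩ := ij
  simp only [Finset.mem_filter, Finset.mem_product, Finset.mem_range, Finset.mem_singleton,
    Prod.mk.injEq]
  constructor
  · rintro ⟨⟨hi, hj⟩, hple, heq⟩
    have hi1 : 1 ≤ i := by omega
    by_cases h2 : 2 ≤ i
    · exfalso
      obtain ⟨i', hi'⟩ : ∃ i', i = i' + 1 := ⟨i - 1, by omega⟩
      have hi'1 : 1 ≤ i' := by omega
      have e1 : s * i = s * i' + s := by rw [hi', Nat.mul_succ]
      have c1 : 2 * i' ≤ s * i' := Nat.mul_le_mul_right i' hs2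
      omega
    · have hieq : i = 1 := by omega
      subst hieq
      constructor
      · rfl
      · omega
  · rintro ⟨rfl, rfl⟩
    refine ⟨⟨by omega, by omega⟩, by omega, by omega⟩

lemma pow_p_surjective {p : ℕ} [CharP F p] (hp : p.Prime) :
    Function.Surjective (fun x : F => x ^ p) := by
  haveI : Fact p.Prime := ⟨hp⟩
  have hinj : Function.Injective (fun x : F => x ^ p) := by
    intro x y hxy
    simp only at hxy
    have h : (x - y) ^ p = x ^ p - y ^ p := sub_pow_char x y
    rw [hxy, sub_self] at h
    have h2 : x - y = 0 := pow_eq_zero_iff hp.ne_zero |>.mp h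
    exact sub_eq_zero.mp h2
  exact Finite.surjective_of_injective hinj

lemma exists_eval_ne {p : ℕ} [CharP F p] (hp : p.Prime) (hcard : p ≤ Fintype.card F)
    (A : Finset (ℕ × ℕ)) (hmem : ((p - 1 : ℕ), (1 : ℕ)) ∈ A)
    (hA : ∀ ij ∈ A, ij.1 ≤ p - 1) (huniq : ∀ ij ∈ A, ij.1 = p - 1 → ij = (p - 1, 1)) :
    ∃ a : F, ∑ ij ∈ A, ((ij.1.factorial : F) * (ij.2.factorial : F))⁻¹ * a ^ ij.1 ≠ 0 := by
  set P : Polynomial F := ∑ ij ∈ A,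
    Polynomial.C (((ij.1.factorial : F) * (ij.2.factorial : F))⁻¹) * Polynomial.X ^ ij.1
    with hPdef
  have hcoeff : P.coeff (p - 1)
      = (((p - 1).factorial : F) * ((1 : ℕ).factorial : F))⁻¹ := by
    rw [hPdef, Polynomial.finset_sum_coeff]
    rw [Finset.sum_eq_single ((p - 1 : ℕ), (1 : ℕ))]
    · simp [Polynomial.coeff_C_mul, Polynomial.coeff_X_pow]
    · intro ij hij hne
      rw [Polynomial.coeff_C_mul, Polynomial.coeff_X_pow, if_neg, mul_zero]
      intro hcon
      exact hne (huniq ij hij hcon.symm)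
    · intro hcon
      exact absurd hmem hcon
  have hc0 : P.coeff (p - 1) ≠ 0 := by
    rw [hcoeff]
    exact inv_ne_zero (mul_ne_zero (cast_factorial_ne_zero hp (by have := hp.pos; omega))
      (cast_factorial_ne_zero hp hp.one_lt))
  have hPne : P ≠ 0 := fun h => hc0 (by rw [h, Polynomial.coeff_zero])
  have hdeg : P.natDegree ≤ p - 1 := by
    rw [hPdef]
    refine Polynomial.natDegree_sum_le_of_forall_le A _ fun ij hij => ?_
    refine le_trans (Polynomial.natDegree_C_mul_le _ _) ?_
    rw [Polynomial.natDegree_X_pow]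
    exact hA ij hij
  obtain ⟨a, ha⟩ := Polynomial.exists_eval_ne_zero_of_natDegree_lt_card P hPne (by
    rw [Cardinal.mk_fintype]
    have h1 : P.natDegree < p := by have := hp.pos; omega
    exact_mod_cast lt_of_lt_of_le h1 hcard)
  refine ⟨a, ?_⟩
  have heval : Polynomial.eval a P
      = ∑ ij ∈ A, ((ij.1.factorial : F) * (ij.2.factorial : F))⁻¹ * a ^ ij.1 := by
    rw [hPdef, Polynomial.eval_finset_sum]
    simp
  rw [← heval]
  exact ha

lemma exists_witness {p : ℕ} [CharP F p] (hp : p.Prime) {m : ℕ}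
    (hpm : p ≤ m) (d : F) :
    ∃ s t : ℕ, ∃ a b : F, 1 ≤ t ∧ t ≤ s ∧ s + (p - 1) * t = m ∧
      (∑ ij ∈ (Finset.range p ×ˢ Finset.range p).filter
          (fun ij => p ≤ ij.1 + ij.2 ∧ s * ij.1 + t * ij.2 = m),
        ((ij.1.factorial : F) * (ij.2.factorial : F))⁻¹ * (a ^ ij.1 * b ^ ij.2)) = d := by
  have hp2 : 2 ≤ p := hp.two_le
  rcases Nat.lt_or_ge p m with hlt | hge
  · -- case p < m : take t = 1, s = m - p + 1 ≥ 2
    refine ⟨m - p + 1, 1, (((1 : ℕ).factorial : F) * ((p - 1).factorial : F)) * d, 1,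
      le_refl 1, by omega, by omega, ?_⟩
    rw [filter_singleton_case (p := p) (m := m) (s := m - p + 1) hp2 (by omega) (by omega)]
    rw [Finset.sum_singleton]
    have hne : (((1 : ℕ).factorial : F) * ((p - 1).factorial : F)) ≠ 0 :=
      mul_ne_zero (cast_factorial_ne_zero hp hp.one_lt)
        (cast_factorial_ne_zero hp (by omega))
    rw [pow_one, one_pow, mul_one]
    rw [inv_mul_eq_iff_eq_mul₀ hne]
  · -- case p = m : s = t = 1
    have hm : m = p := by omega
    have hcard : p ≤ Fintype.card F := by
      obtain ⟨k, _, hcardeq⟩ := FiniteField.card F p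
      rw [hcardeq]
      exact Nat.le_self_pow k.pos.ne' p
    set A := (Finset.range p ×ˢ Finset.range p).filter
        (fun ij => p ≤ ij.1 + ij.2 ∧ 1 * ij.1 + 1 * ij.2 = m) with hAdef
    have hmemA : ((p - 1 : ℕ), (1 : ℕ)) ∈ A := by
      rw [hAdef]
      simp only [Finset.mem_filter, Finset.mem_product, Finset.mem_range]
      refine ⟨⟨by omega, by omega⟩, by omega, by omega⟩
    have hAbound : ∀ ij ∈ A, ij.1 ≤ p - 1 := by
      intro ij hij
      rw [hAdef] at hij
      simp only [Finset.mem_filter, Finset.mem_product, Finset.mem_range] at hij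
      omega
    have hAuniq : ∀ ij ∈ A, ij.1 = p - 1 → ij = ((p - 1 : ℕ), (1 : ℕ)) := by
      intro ij hij h1
      rw [hAdef] at hij
      simp only [Finset.mem_filter, Finset.mem_product, Finset.mem_range] at hij
      obtain ⟨i, j⟩ := ij
      simp only at h1
      subst h1
      have hj1 : j = 1 := by omega
      subst hj1
      rfl
    obtain ⟨a0, ha0⟩ := exists_eval_ne hp hcard A hmemA hAbound hAuniq
    obtain ⟨lam, hlam⟩ := pow_p_surjective hp
      (d * (∑ ij ∈ A, ((ij.1.factorial : F) * (ij.2.factorial : F))⁻¹ * a0 ^ ij.1)⁻¹)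
    refine ⟨1, 1, lam * a0, lam, le_refl 1, le_refl 1, by omega, ?_⟩
    have hsum : ∑ ij ∈ A,
        ((ij.1.factorial : F) * (ij.2.factorial : F))⁻¹ * ((lam * a0) ^ ij.1 * lam ^ ij.2)
        = lam ^ p * ∑ ij ∈ A, ((ij.1.factorial : F) * (ij.2.factorial : F))⁻¹ * a0 ^ ij.1 := by
      rw [Finset.mul_sum]
      refine Finset.sum_congr rfl fun ij hij => ?_
      rw [hAdef] at hij
      simp only [Finset.mem_filter, Finset.mem_product, Finset.mem_range] at hij
      have hijp : ij.1 + ij.2 = p := by omega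
      rw [mul_pow, ← hijp, pow_add]
      ring
    have hlam' : lam ^ p
        = d * (∑ ij ∈ A, ((ij.1.factorial : F) * (ij.2.factorial : F))⁻¹ * a0 ^ ij.1)⁻¹ :=
      hlam
    rw [← hAdef, hsum, hlam', mul_assoc, inv_mul_cancel₀ ha0, mul_one]


lemma mat_mul {S : NonUnitalSubalgebra F (Matrix (Fin n) (Fin n) F)} (g h : ↥(grp S)) :
    mat (g * h) = mat g * mat h := rfl

lemma hom_of_mul {G : Type} [Group G] {f : G → ℂ} (hone : f 1 = 1)
    (hmul : ∀ g h : G, f (g * h) = f g * f h) : ∃ φ : G →* ℂˣ, ∀ g, f g = φ g := by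
  have hunit : ∀ g : G, f g * f g⁻¹ = 1 := fun g => by
    rw [← hmul, mul_inv_cancel, hone]
  have hunit' : ∀ g : G, f g⁻¹ * f g = 1 := fun g => by rw [mul_comm]; exact hunit g
  exact ⟨{ toFun := fun g => ⟨f g, f g⁻¹, hunit g, hunit' g⟩
           map_one' := Units.ext (by simpa using hone)
           map_mul' := fun g h => Units.ext (by simpa using hmul g h) }, fun g => rfl⟩

lemma isCharacter_of_hom {G : Type} [Group G] (φ : G →* ℂˣ) :
    IsCharacter (fun g : G => (φ g : ℂ)) := by
  let ρ : Representation ℂ G ℂ :=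
    { toFun := fun g => ((φ g : ℂ) • LinearMap.id : ℂ →ₗ[ℂ] ℂ)
      map_one' := by
        refine LinearMap.ext fun x => ?_
        simp
      map_mul' := by
        intro g h
        refine LinearMap.ext fun x => ?_
        simp [Module.End.mul_apply, Units.val_mul, mul_assoc]
        ring }
  refine ⟨FDRep.of ρ, ?_⟩
  funext g
  have h1 : (FDRep.of ρ).character g = LinearMap.trace ℂ ℂ (ρ g) := rfl
  rw [h1]
  have h2 : ρ g = (φ g : ℂ) • LinearMap.id := rfl
  rw [h2, LinearMap.map_smul, LinearMap.trace_id, smul_eq_mul, Module.finrank_self]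
  norm_num

lemma char_mul_of_dim_one {G : Type} [Group G] (V : FDRep ℂ G)
    (h1 : Module.finrank ℂ V = 1) (g h : G) :
    V.character (g * h) = V.character g * V.character h := by
  let b : Module.Basis (Fin 1) ℂ V := Module.finBasisOfFinrankEq ℂ V h1
  have tr : ∀ A : V →ₗ[ℂ] V, LinearMap.trace ℂ V A = LinearMap.toMatrix b b A 0 0 := by
    intro A
    rw [LinearMap.trace_eq_matrix_trace ℂ b, Matrix.trace, Fin.sum_univ_one]
    rfl
  simp only [FDRep.character]
  rw [map_mul, tr, tr, tr, LinearMap.toMatrix_mul b, Matrix.mul_apply, Fin.sum_univ_one]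

lemma hom_of_isCharacter {G : Type} [Group G] {f : G → ℂ} (hchar : IsCharacter f)
    (hone : f 1 = 1) : ∃ φ : G →* ℂˣ, ∀ g, f g = φ g := by
  obtain ⟨V, hV⟩ := hchar
  have hdim : Module.finrank ℂ V = 1 := by
    have h := FDRep.char_one V
    rw [hV, hone] at h
    exact_mod_cast h.symm
  refine hom_of_mul hone fun g h => ?_
  rw [← hV]
  exact char_mul_of_dim_one V hdim g h


end Statement12Aux
/-- The exponential Kirillov function `ψ^Exp_κ` of `A_n(q)`, determined
by `ψ^Exp_κ(Exp X) = θ(X_{1,n})`, is a character of `A_n(q)` if and only if `n ≤ p`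
(equivalently, it is a group homomorphism to `ℂ^×` if and only if `n ≤ p`). -/
theorem statement12 (p : ℕ) (hp : p.Prime) (F : Type) [Field F] [Fintype F] [CharP F p]
    (θ : AddChar F ℂ) (hθ : θ ≠ 1) (n : ℕ) (hn : 1 < n) :
    ∀ f : ↥(grp (aAlg n F)) → ℂ,
      (∀ (X : ↥(aAlg n F)) (g : ↥(grp (aAlg n F))),
        mat g = ∑ i ∈ Finset.range p,
          (Nat.factorial i : F)⁻¹ • ((X : Matrix (Fin n) (Fin n) F) ^ i) →
        f g = θ (kappaDual n hn F X)) →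
      ((IsCharacter f ↔ n ≤ p) ∧
       ((∃ φ : ↥(grp (aAlg n F)) →* ℂˣ, ∀ g, f g = φ g) ↔ n ≤ p)) := by
  intro f hf
  have hn0 : 0 < n := by omega
  have hp2 : 2 ≤ p := hp.two_le
  have hmat1 : mat (1 : ↥(grp (aAlg n F))) =
      ∑ i ∈ Finset.range p, (Nat.factorial i : F)⁻¹ •
        (((0 : ↥(aAlg n F)) : Matrix (Fin n) (Fin n) F)) ^ i := by
    have h1 : mat (1 : ↥(grp (aAlg n F))) = 1 := rfl
    have h2 : ((0 : ↥(aAlg n F)) : Matrix (Fin n) (Fin n) F) = 0 := rfl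
    rw [h1, h2]
    exact (expM_zero hp.pos).symm
  have hone : f 1 = 1 := by
    rw [hf 0 1 hmat1, map_zero, AddChar.map_zero_eq_one]
  have hiff : (∃ φ : ↥(grp (aAlg n F)) →* ℂˣ, ∀ g, f g = φ g) ↔ n ≤ p := by
    constructor
    · rintro ⟨φ, hφ⟩
      by_contra hnp
      push_neg at hnp
      obtain ⟨d, hd⟩ := AddChar.ne_one_iff.mp hθ
      have hm : n = (n - 1) + 1 := by omega
      obtain ⟨s, t, a, b, ht, hts, hst, hc⟩ :=
        exists_witness hp (m := n - 1) (by omega) d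
      set X := a • EM n F s with hXdef
      set Y := b • EM n F t with hYdef
      have hs1 : 1 ≤ s := le_trans ht hts
      have hXmem : X ∈ aAlg n F := SMulMemClass.smul_mem _ (EM_mem hs1)
      have hYmem : Y ∈ aAlg n F := SMulMemClass.smul_mem _ (EM_mem ht)
      have hZmem : X + Y + d • EM n F (n - 1) ∈ aAlg n F :=
        add_mem (add_mem hXmem hYmem) (SMulMemClass.smul_mem _ (EM_mem (by omega)))
      obtain ⟨g1, hg1⟩ := exists_grp_elem hp.pos hXmem
      obtain ⟨g2, hg2⟩ := exists_grp_elem hp.pos hYmem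
      have hprod : mat (g1 * g2) = expM p (X + Y + d • EM n F (n - 1)) := by
        rw [mat_mul, hg1, hg2, witness_key hp hm ht hts hst a b, hc]
      have hsm : s < n - 1 := by
        have h11 : 1 * 1 ≤ (p - 1) * t := Nat.mul_le_mul (by omega) ht
        omega
      have htm : t < n - 1 := by omega
      have heX : X (⟨0, by omega⟩ : Fin n) (⟨n - 1, by omega⟩ : Fin n) = 0 := by
        rw [hXdef, Matrix.smul_apply]
        show a • (if ((⟨0, by omega⟩ : Fin n) : ℕ) + s = ((⟨n - 1, by omega⟩ : Fin n) : ℕ)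
          then (1 : F) else 0) = 0
        rw [if_neg (by simp only [Fin.val_mk]; omega), smul_zero]
      have heY : Y (⟨0, by omega⟩ : Fin n) (⟨n - 1, by omega⟩ : Fin n) = 0 := by
        rw [hYdef, Matrix.smul_apply]
        show b • (if ((⟨0, by omega⟩ : Fin n) : ℕ) + t = ((⟨n - 1, by omega⟩ : Fin n) : ℕ)
          then (1 : F) else 0) = 0
        rw [if_neg (by simp only [Fin.val_mk]; omega), smul_zero]
      have heD : (d • EM n F (n - 1)) (⟨0, by omega⟩ : Fin n) (⟨n - 1, by omega⟩ : Fin n)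
          = d := by
        rw [Matrix.smul_apply]
        show d • (if ((⟨0, by omega⟩ : Fin n) : ℕ) + (n - 1)
            = ((⟨n - 1, by omega⟩ : Fin n) : ℕ) then (1 : F) else 0) = d
        rw [if_pos (by simp only [Fin.val_mk]; omega), smul_eq_mul, mul_one]
      have hκX : kappaDual n hn F ⟨X, hXmem⟩ = 0 := heX
      have hκY : kappaDual n hn F ⟨Y, hYmem⟩ = 0 := heY
      have hκZ : kappaDual n hn F ⟨X + Y + d • EM n F (n - 1), hZmem⟩ = d := by
        show (X + Y + d • EM n F (n - 1)) (⟨0, by omega⟩ : Fin n)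
          (⟨n - 1, by omega⟩ : Fin n) = d
        rw [Matrix.add_apply, Matrix.add_apply, heX, heY, heD, zero_add, zero_add]
      have hfg1 : f g1 = 1 := by
        rw [hf ⟨X, hXmem⟩ g1 hg1, hκX, AddChar.map_zero_eq_one]
      have hfg2 : f g2 = 1 := by
        rw [hf ⟨Y, hYmem⟩ g2 hg2, hκY, AddChar.map_zero_eq_one]
      have hfg12 : f (g1 * g2) = θ d := by
        rw [hf ⟨X + Y + d • EM n F (n - 1), hZmem⟩ (g1 * g2) hprod, hκZ]
      have hcontra : θ d = 1 := by
        rw [← hfg12, hφ, map_mul, Units.val_mul, ← hφ, ← hφ, hfg1, hfg2, mul_one]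
      exact hd hcontra
    · intro hnp
      have hmul : ∀ g h : ↥(grp (aAlg n F)), f (g * h) = f g * f h := by
        intro g h
        obtain ⟨X, hXmem, hXe⟩ := expM_surjective hp hnp hn0 (mat_mem g)
        obtain ⟨Y, hYmem, hYe⟩ := expM_surjective hp hnp hn0 (mat_mem h)
        have hXg : expM p X = mat g := by rw [hXe]; noncomm_ring
        have hYg : expM p Y = mat h := by rw [hYe]; noncomm_ring
        have hZg : mat (g * h) = expM p (X + Y) := by
          rw [mat_mul, ← hXg, ← hYg, expM_add hp hnp hXmem hYmem]
        rw [hf ⟨X, hXmem⟩ g hXg.symm, hf ⟨Y, hYmem⟩ h hYg.symm,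
          hf ⟨X + Y, add_mem hXmem hYmem⟩ (g * h) hZg]
        have hsub : (⟨X + Y, add_mem hXmem hYmem⟩ : ↥(aAlg n F))
            = ⟨X, hXmem⟩ + ⟨Y, hYmem⟩ := rfl
        rw [hsub, map_add, AddChar.map_add_eq_mul]
      exact hom_of_mul hone hmul
  refine ⟨⟨?_, ?_⟩, hiff⟩
  · intro hchar
    exact hiff.mp (hom_of_isCharacter hchar hone)
  · intro hnp
    obtain ⟨φ, hφ⟩ := hiff.mpr hnp
    have hfeq : f = fun g => (φ g : ℂ) := funext hφ
    rw [hfeq]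
    exact isCharacter_of_hom φ


end Paper
end
end

section
/- Let n be a finite-dimensional nilpotent associative F_q-algebra and λ ∈ n*, with subspaces l^i, s^i defined by the recursion in the context. Then for every i ≥ 0: (a) s^{i+1} is a subalgebra of s^i (closed under multiplication); (b) l^{i+1} is a right ideal of s^i and a two-sided ideal of s^{i+1}; and (c) if s^{d−1} = s^d for some d ≥ 1, then l^{d+i} = l^d and s^{d+i} = s^d for all i ≥ 0. -/
open scoped BigOperators Classical ComplexOrder
open Complex

set_option linter.unusedSectionVars false

noncomputable section

namespace Paper

variable {F : Type*} [Field F]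

/-! ### Algebra groups of matrix algebras -/

variable {n : ℕ}

variable [Fintype F] {S : NonUnitalSubalgebra F (Matrix (Fin n) (Fin n) F)}

section ChainAux

variable {A : Type*} [NonUnitalRing A] [Module F A] [SMulCommClass F A A] [IsScalarTower F A A]
  (lam : A →ₗ[F] F)

lemma mem_lker' {s t : Submodule F A} {x : A} :
    x ∈ lker lam s t ↔ x ∈ s ∧ ∀ y ∈ t, lam (x * y) = 0 := Iff.rfl

lemma lC_succ' (i : ℕ) : lC lam (i + 1) = lker lam (sC lam i) (sC lam i) := rfl

lemma sC_succ' (i : ℕ) : sC lam (i + 1) = lker lam (sC lam i) (lC lam (i + 1)) := rfl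

lemma sC_closed' : ∀ i, ∀ x y : A, x ∈ sC lam i → y ∈ sC lam i → x * y ∈ sC lam i := by
  intro i
  induction i with
  | zero => intro x y _ _; exact Submodule.mem_top
  | succ i ih =>
    have hri : ∀ x ∈ lC lam (i + 1), ∀ y ∈ sC lam i, x * y ∈ lC lam (i + 1) := by
      intro x hx y hy
      rw [lC_succ', mem_lker'] at hx ⊢
      refine ⟨ih x y hx.1 hy, fun z hz => ?_⟩
      rw [mul_assoc]
      exact hx.2 _ (ih y z hy hz)
    have hli : ∀ y ∈ sC lam (i + 1), ∀ x ∈ lC lam (i + 1), y * x ∈ lC lam (i + 1) := by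
      intro y hy x hx
      rw [sC_succ', mem_lker'] at hy
      rw [lC_succ', mem_lker'] at hx ⊢
      refine ⟨ih y x hy.1 hx.1, fun z hz => ?_⟩
      rw [mul_assoc]
      exact hy.2 _ (hri x (by rw [lC_succ', mem_lker']; exact hx) z hz)
    intro x y hx hy
    have hx' := hx
    rw [sC_succ', mem_lker'] at hx' ⊢
    refine ⟨ih x y hx'.1 ((sC_succ' lam i ▸ hy : (_ : Prop)).1), fun z hz => ?_⟩
    rw [mul_assoc]
    exact hx'.2 _ (hli y hy z hz)

lemma lC_right_ideal' (i : ℕ) :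
    ∀ x ∈ lC lam (i + 1), ∀ y ∈ sC lam i, x * y ∈ lC lam (i + 1) := by
  intro x hx y hy
  rw [lC_succ', mem_lker'] at hx ⊢
  refine ⟨sC_closed' lam i x y hx.1 hy, fun z hz => ?_⟩
  rw [mul_assoc]
  exact hx.2 _ (sC_closed' lam i y z hy hz)

lemma lC_left_ideal' (i : ℕ) :
    ∀ y ∈ sC lam (i + 1), ∀ x ∈ lC lam (i + 1), y * x ∈ lC lam (i + 1) := by
  intro y hy x hx
  rw [sC_succ', mem_lker'] at hy
  rw [lC_succ', mem_lker'] at hx ⊢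
  refine ⟨sC_closed' lam i y x hy.1 hx.1, fun z hz => ?_⟩
  rw [mul_assoc]
  exact hy.2 _ (lC_right_ideal' lam i x (by rw [lC_succ', mem_lker']; exact hx) z hz)

lemma lC_le_sC' (i : ℕ) : lC lam (i + 1) ≤ sC lam (i + 1) := by
  intro x hx
  have hx' := hx
  rw [lC_succ', mem_lker'] at hx'
  rw [sC_succ', mem_lker']
  exact ⟨hx'.1, fun y hy => hx'.2 y ((lC_succ' lam i ▸ hy : (_ : Prop)).1)⟩

end ChainAux

/-- For a finite-dimensional nilpotent associative `F_q`-algebra `A` and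
`λ ∈ A*`: (a) each `s^{i+1}` is a subalgebra of `s^i`; (b) each `l^{i+1}` is a right ideal
of `s^i` and a two-sided ideal of `s^{i+1}`; (c) if `s^{d-1} = s^d` then the chains are
constant from `d` onwards. -/
theorem statement19 (p : ℕ) (hp : p.Prime) (F : Type) [Field F] [Fintype F] [CharP F p]
    (A : Type) [NonUnitalRing A] [Module F A] [SMulCommClass F A A] [IsScalarTower F A A]
    [Module.Finite F A] (hnil : IsNilpotentAlgebra A) (lam : A →ₗ[F] F) :
    (∀ i : ℕ, sC lam (i + 1) ≤ sC lam i ∧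
      ∀ x y : A, x ∈ sC lam (i + 1) → y ∈ sC lam (i + 1) → x * y ∈ sC lam (i + 1)) ∧
    (∀ i : ℕ, lC lam (i + 1) ≤ sC lam i ∧
      (∀ x ∈ lC lam (i + 1), ∀ y ∈ sC lam i, x * y ∈ lC lam (i + 1)) ∧
      lC lam (i + 1) ≤ sC lam (i + 1) ∧
      (∀ x ∈ lC lam (i + 1), ∀ y ∈ sC lam (i + 1),
        x * y ∈ lC lam (i + 1) ∧ y * x ∈ lC lam (i + 1))) ∧
    (∀ d : ℕ, 1 ≤ d → sC lam (d - 1) = sC lam d →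
      ∀ i : ℕ, lC lam (d + i) = lC lam d ∧ sC lam (d + i) = sC lam d) := by
  refine ⟨fun i => ⟨fun x hx => ((sC_succ' lam i ▸ hx : (_ : Prop)).1 : x ∈ sC lam i),
    sC_closed' lam (i + 1)⟩,
    fun i => ⟨fun x hx => ((lC_succ' lam i ▸ hx : (_ : Prop)).1 : x ∈ sC lam i),
      lC_right_ideal' lam i, lC_le_sC' lam i,
      fun x hx y hy => ⟨lC_right_ideal' lam i x hx y
          (((sC_succ' lam i ▸ hy : (_ : Prop)).1 : y ∈ sC lam i)),
        lC_left_ideal' lam i y hy x hx⟩⟩, ?_⟩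
  intro d hd hsd i
  induction i with
  | zero => exact ⟨rfl, rfl⟩
  | succ i ih =>
    obtain ⟨e, rfl⟩ : ∃ e, d = e + 1 := ⟨d - 1, by omega⟩
    have hsd' : sC lam e = sC lam (e + 1) := hsd
    have hl : lC lam (e + 1 + i + 1) = lC lam (e + 1) := by
      rw [lC_succ', ih.2, ← hsd', lC_succ']
    have hs : sC lam (e + 1 + i + 1) = sC lam (e + 1) := by
      rw [sC_succ', ih.2, hl]
      conv_rhs => rw [sC_succ']
      rw [← hsd']
    have heq : e + 1 + (i + 1) = e + 1 + i + 1 := by omega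
    rw [heq]
    exact ⟨hl, hs⟩

end Paper
end
end
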